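/- arXiv:0707.1069 — 5 statements merged into one kernel-verified Lean document; each statement's English description precedes it below -/
import Mathlib

section
/- Let G be a finite simple graph and C a proper coloring of G. If v and w lie in distinct color classes of C and both directed edges (v,w) and (w,v) are C-lonely, then exchanging v and w between their color classes yields another proper coloring C' of G with Frame(C') = Frame(C). -/
open Finset

variable {V : Type*} [Fintype V] [DecidableEq V]

/-- A (proper) coloring of `G`: a partition of the vertex set into nonempty independent sets. -/
def IsColoring (G : SimpleGraph V) (C : Finset (Finset V)) : Prop :=
  (∀ I ∈ C, I.Nonempty) ∧
  (∀ v : V, ∃! I, I ∈ C ∧ v ∈ I) ∧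
  (∀ I ∈ C, ∀ v ∈ I, ∀ w ∈ I, ¬ G.Adj v w)

/-- The frame of a coloring: the multiset of the orders of its color classes. -/
def Frame (C : Finset (Finset V)) : Multiset ℕ :=
  C.val.map Finset.card

/-- The directed edge `(v, w)` is `C`-lonely: `w` lies in a color class `I` not containing `v`
and `N(v) ∩ I = {w}`. -/
def Lonely (G : SimpleGraph V) (C : Finset (Finset V)) (v w : V) : Prop :=
  ∃ I ∈ C, v ∉ I ∧ w ∈ I ∧ ∀ x ∈ I, (G.Adj v x ↔ x = w)

/-- The chromatic number: the minimum number of color classes in a proper coloring. -/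
noncomputable def chi (G : SimpleGraph V) : ℕ :=
  sInf {n | ∃ C : Finset (Finset V), IsColoring G C ∧ C.card = n}

/-- An optimal coloring: a proper coloring with `χ(G)` color classes. -/
def IsOptimalColoring (G : SimpleGraph V) (C : Finset (Finset V)) : Prop :=
  IsColoring G C ∧ C.card = chi G

/-- A (directed) path in the `C`-lonely graph `L_C(G)`, as a nonempty duplicate-free list of
vertices whose consecutive pairs are `C`-lonely edges. -/
def IsLonelyPath (G : SimpleGraph V) (C : Finset (Finset V)) (p : List V) : Prop :=
  p ≠ [] ∧ p.Nodup ∧ List.Chain' (Lonely G C) p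

/-- The stinginess `ι(G)`: the maximum number of singleton color classes appearing in an
optimal coloring of `G`. -/
noncomputable def stinginess (G : SimpleGraph V) : ℕ :=
  sSup {n | ∃ C : Finset (Finset V), IsOptimalColoring G C ∧
    (C.filter fun I => I.card = 1).card = n}

/-- The independence number `α(G)`. -/
noncomputable def indepNum (G : SimpleGraph V) : ℕ :=
  sSup {n | ∃ s : Finset V, (∀ v ∈ s, ∀ w ∈ s, ¬ G.Adj v w) ∧ s.card = n}

/-- An `r`-bounded coloring has all color classes of order at most `r`. -/
def RBounded (r : ℕ) (C : Finset (Finset V)) : Prop :=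
  ∀ I ∈ C, I.card ≤ r

/-- `χ_r(G)`: the minimum number of color classes in an `r`-bounded coloring of `G`. -/
noncomputable def chiR (G : SimpleGraph V) (r : ℕ) : ℕ :=
  sInf {n | ∃ C : Finset (Finset V), IsColoring G C ∧ RBounded r C ∧ C.card = n}

/-- An optimal `r`-bounded coloring. -/
def IsOptimalRBounded (G : SimpleGraph V) (r : ℕ) (C : Finset (Finset V)) : Prop :=
  IsColoring G C ∧ RBounded r C ∧ C.card = chiR G r

/-- `M_r(G)`: the maximum number of order-`r` color classes in an optimal `r`-bounded
coloring of `G`. -/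
noncomputable def Mr (G : SimpleGraph V) (r : ℕ) : ℕ :=
  sSup {n | ∃ C : Finset (Finset V), IsOptimalRBounded G r C ∧
    (C.filter fun I => I.card = r).card = n}

/-- The `r`-bounded stinginess `ι_r(G)`: the maximum number of singleton color classes in an
optimal `r`-bounded coloring of `G`. -/
noncomputable def stinginessR (G : SimpleGraph V) (r : ℕ) : ℕ :=
  sSup {n | ∃ C : Finset (Finset V), IsOptimalRBounded G r C ∧
    (C.filter fun I => I.card = 1).card = n}

/-- `P` is a frame property: membership in `P` only depends on the frame. -/
def IsFrameProperty (G : SimpleGraph V) (P : Finset (Finset V) → Prop) : Prop :=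
  ∀ C C' : Finset (Finset V), IsColoring G C → IsColoring G C' →
    Frame C = Frame C' → P C → P C'

/-- `P` is singleton-friendly: `P` is preserved by merging two singleton color classes. -/
def IsSingletonFriendly (G : SimpleGraph V) (P : Finset (Finset V) → Prop) : Prop :=
  ∀ C : Finset (Finset V), IsColoring G C → ∀ a b : V, a ≠ b → ¬ G.Adj a b →
    ({a} : Finset V) ∈ C → ({b} : Finset V) ∈ C → P C →
      P (insert ({a, b} : Finset V) ((C.erase {a}).erase {b}))

/-- A `P`-optimal coloring: a coloring satisfying `P` with the minimum number of color classes
among colorings satisfying `P`. -/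
def IsPOptimal (G : SimpleGraph V) (P : Finset (Finset V) → Prop)
    (C : Finset (Finset V)) : Prop :=
  IsColoring G C ∧ P C ∧
    ∀ C' : Finset (Finset V), IsColoring G C' → P C' → C.card ≤ C'.card

/-- `Frame_m(C)`: the entries of the frame of `C` that are at least `m`. -/
def FrameGe (m : ℕ) (C : Finset (Finset V)) : Multiset ℕ :=
  (Frame C).filter (fun k => m ≤ k)

/-- The matching number `ν(G)`: the maximum number of edges in a matching of `G`. -/
noncomputable def matchingNumber (G : SimpleGraph V) : ℕ :=
  sSup {n | ∃ M : G.Subgraph, M.IsMatching ∧ M.edgeSet.ncard = n}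
theorem statement_0 (G : SimpleGraph V)
    (C : Finset (Finset V)) (hC : IsColoring G C)
    (v w : V) (Iv Iw : Finset V) (hIv : Iv ∈ C) (hIw : Iw ∈ C)
    (hv : v ∈ Iv) (hw : w ∈ Iw) (hne : Iv ≠ Iw)
    (hvw : Lonely G C v w) (hwv : Lonely G C w v) :
    IsColoring G (insert (insert w (Iv.erase v))
      (insert (insert v (Iw.erase w)) ((C.erase Iv).erase Iw))) ∧
    Frame (insert (insert w (Iv.erase v))
      (insert (insert v (Iw.erase w)) ((C.erase Iv).erase Iw))) = Frame C := by
  obtain ⟨hne', huniq, hind⟩ := hC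
  have hdisj : ∀ I₁ ∈ C, ∀ I₂ ∈ C, ∀ u : V, u ∈ I₁ → u ∈ I₂ → I₁ = I₂ := by
    intro I₁ h1 I₂ h2 u hu1 hu2
    exact (huniq u).unique ⟨h1, hu1⟩ ⟨h2, hu2⟩
  obtain ⟨I, hI, hvI, hwI, hIlon⟩ := hvw
  have hIeq : I = Iw := hdisj I hI Iw hIw w hwI hw
  rw [hIeq] at hvI hwI hIlon
  obtain ⟨J, hJ, hwJ, hvJ, hJlon⟩ := hwv
  have hJeq : J = Iv := hdisj J hJ Iv hIv v hvJ hv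
  rw [hJeq] at hwJ hvJ hJlon
  have hadj : G.Adj v w := (hIlon w hw).mpr rfl
  have hvwne : v ≠ w := hadj.ne
  set A : Finset V := insert w (Iv.erase v) with hA
  set B : Finset V := insert v (Iw.erase w) with hB
  set S : Finset (Finset V) := (C.erase Iv).erase Iw with hS
  -- membership facts
  have hSC : ∀ J ∈ S, J ∈ C ∧ J ≠ Iv ∧ J ≠ Iw := by
    intro J hJ
    rw [hS] at hJ
    exact ⟨Finset.mem_of_mem_erase (Finset.mem_of_mem_erase hJ),
      Finset.ne_of_mem_erase (Finset.mem_of_mem_erase hJ), Finset.ne_of_mem_erase hJ⟩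
  have hwnIv : w ∉ Iv := fun h => hne (hdisj Iv hIv Iw hIw w h hw)
  have hvnIw : v ∉ Iw := fun h => hne (hdisj Iv hIv Iw hIw v hv h)
  have hmemA : ∀ u : V, u ∈ A ↔ u = w ∨ (u ∈ Iv ∧ u ≠ v) := by
    intro u; rw [hA]; simp [Finset.mem_insert, Finset.mem_erase, and_comm]
  have hmemB : ∀ u : V, u ∈ B ↔ u = v ∨ (u ∈ Iw ∧ u ≠ w) := by
    intro u; rw [hB]; simp [Finset.mem_insert, Finset.mem_erase, and_comm]
  have hABdisj : ∀ u : V, u ∈ A → u ∈ B → False := by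
    intro u huA huB
    rcases (hmemA u).mp huA with rfl | ⟨hu1, hu1'⟩
    · rcases (hmemB u).mp huB with h | ⟨h, h'⟩
      · exact hvwne h.symm
      · exact h' rfl
    · rcases (hmemB u).mp huB with rfl | ⟨h, _⟩
      · exact hu1' rfl
      · exact hne (hdisj Iv hIv Iw hIw u hu1 h)
  have hASdisj : ∀ J ∈ S, ∀ u : V, u ∈ A → u ∈ J → False := by
    intro J hJ u huA huJ
    obtain ⟨hJC, hJv, hJw⟩ := hSC J hJ
    rcases (hmemA u).mp huA with rfl | ⟨hu1, _⟩
    · exact hJw (hdisj J hJC Iw hIw u huJ hw)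
    · exact hJv (hdisj J hJC Iv hIv u huJ hu1)
  have hBSdisj : ∀ J ∈ S, ∀ u : V, u ∈ B → u ∈ J → False := by
    intro J hJ u huB huJ
    obtain ⟨hJC, hJv, hJw⟩ := hSC J hJ
    rcases (hmemB u).mp huB with rfl | ⟨hu1, _⟩
    · exact hJv (hdisj J hJC Iv hIv u huJ hv)
    · exact hJw (hdisj J hJC Iw hIw u huJ hu1)
  have hAB : A ≠ B := by
    intro h
    exact hABdisj w (by rw [hA]; exact Finset.mem_insert_self _ _)
      (by rw [← h, hA]; exact Finset.mem_insert_self _ _)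
  have hAS : A ∉ S := fun h =>
    hASdisj A h w (by rw [hA]; exact Finset.mem_insert_self _ _)
      (by rw [hA]; exact Finset.mem_insert_self _ _)
  have hBS : B ∉ S := fun h =>
    hBSdisj B h v (by rw [hB]; exact Finset.mem_insert_self _ _)
      (by rw [hB]; exact Finset.mem_insert_self _ _)
  have hmemC' : ∀ X : Finset V, X ∈ insert A (insert B S) ↔ X = A ∨ X = B ∨ X ∈ S := by
    intro X; simp [Finset.mem_insert]
  -- pairwise "disjoint or equal"
  have hpair : ∀ X ∈ insert A (insert B S), ∀ Y ∈ insert A (insert B S),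
      ∀ u : V, u ∈ X → u ∈ Y → X = Y := by
    intro X hX Y hY u huX huY
    rcases (hmemC' X).mp hX with rfl | rfl | hXS <;>
      rcases (hmemC' Y).mp hY with rfl | rfl | hYS
    · rfl
    · exact absurd (hABdisj u huX huY) (by simp)
    · exact absurd (hASdisj Y hYS u huX huY) (by simp)
    · exact absurd (hABdisj u huY huX) (by simp)
    · rfl
    · exact absurd (hBSdisj Y hYS u huX huY) (by simp)
    · exact absurd (hASdisj X hXS u huY huX) (by simp)
    · exact absurd (hBSdisj X hXS u huY huX) (by simp)
    · exact hdisj X (hSC X hXS).1 Y (hSC Y hYS).1 u huX huY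
  constructor
  · refine ⟨?_, ?_, ?_⟩
    · -- nonempty
      intro X hX
      rcases (hmemC' X).mp hX with rfl | rfl | hXS
      · exact ⟨w, by rw [hA]; exact Finset.mem_insert_self _ _⟩
      · exact ⟨v, by rw [hB]; exact Finset.mem_insert_self _ _⟩
      · exact hne' X (hSC X hXS).1
    · -- existence and uniqueness of class
      intro u
      have hex : ∃ X, X ∈ insert A (insert B S) ∧ u ∈ X := by
        obtain ⟨J, ⟨hJC, huJ⟩, -⟩ := huniq u
        by_cases hJIv : J = Iv
        · subst hJIv
          by_cases huv : u = v
          · exact ⟨B, (hmemC' B).mpr (Or.inr (Or.inl rfl)), (hmemB u).mpr (Or.inl huv)⟩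
          · exact ⟨A, (hmemC' A).mpr (Or.inl rfl), (hmemA u).mpr (Or.inr ⟨huJ, huv⟩)⟩
        · by_cases hJIw : J = Iw
          · subst hJIw
            by_cases huw : u = w
            · exact ⟨A, (hmemC' A).mpr (Or.inl rfl), (hmemA u).mpr (Or.inl huw)⟩
            · exact ⟨B, (hmemC' B).mpr (Or.inr (Or.inl rfl)), (hmemB u).mpr (Or.inr ⟨huJ, huw⟩)⟩
          · refine ⟨J, (hmemC' J).mpr (Or.inr (Or.inr ?_)), huJ⟩
            rw [hS]
            exact Finset.mem_erase.mpr ⟨hJIw, Finset.mem_erase.mpr ⟨hJIv, hJC⟩⟩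
      obtain ⟨X, hX, huX⟩ := hex
      exact ⟨X, ⟨hX, huX⟩, fun Y ⟨hY, huY⟩ => hpair Y hY X hX u huY huX⟩
    · -- independence
      intro X hX x hx y hy hadjxy
      rcases (hmemC' X).mp hX with rfl | rfl | hXS
      · rcases (hmemA x).mp hx with rfl | ⟨hx1, hx2⟩ <;>
          rcases (hmemA y).mp hy with rfl | ⟨hy1, hy2⟩
        · exact G.irrefl hadjxy
        · exact hy2 ((hJlon y hy1).mp hadjxy)
        · exact hx2 ((hJlon x hx1).mp hadjxy.symm)
        · exact hind Iv hIv x hx1 y hy1 hadjxy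
      · rcases (hmemB x).mp hx with rfl | ⟨hx1, hx2⟩ <;>
          rcases (hmemB y).mp hy with rfl | ⟨hy1, hy2⟩
        · exact G.irrefl hadjxy
        · exact hy2 ((hIlon y hy1).mp hadjxy)
        · exact hx2 ((hIlon x hx1).mp hadjxy.symm)
        · exact hind Iw hIw x hx1 y hy1 hadjxy
      · exact hind X (hSC X hXS).1 x hx y hy hadjxy
  · -- Frame equality
    have hcardA : A.card = Iv.card := by
      rw [hA, Finset.card_insert_of_notMem (fun h => hwnIv (Finset.mem_of_mem_erase h)),
        Finset.card_erase_add_one hv]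
    have hcardB : B.card = Iw.card := by
      rw [hB, Finset.card_insert_of_notMem (fun h => hvnIw (Finset.mem_of_mem_erase h)),
        Finset.card_erase_add_one hw]
    have hBnS : B ∉ S := hBS
    have hAnBS : A ∉ insert B S := by
      rw [Finset.mem_insert]; rintro (h | h); exacts [hAB h, hAS h]
    have hIwCIv : Iw ∈ C.erase Iv := Finset.mem_erase.mpr ⟨fun h => hne h.symm, hIw⟩
    have hCval : C.val = Iv ::ₘ Iw ::ₘ S.val := by
      have h1 : (C.erase Iv).val = Iw ::ₘ S.val := by
        rw [hS, ← Finset.insert_val_of_notMem (Finset.notMem_erase _ _),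
          Finset.insert_erase hIwCIv]
      have h2 : C.val = Iv ::ₘ (C.erase Iv).val := by
        conv_lhs => rw [← Finset.insert_erase hIv]
        rw [Finset.insert_val_of_notMem (Finset.notMem_erase _ _)]
      rw [h2, h1]
    unfold Frame
    rw [Finset.insert_val_of_notMem hAnBS, Finset.insert_val_of_notMem hBnS, hCval]
    simp [hcardA, hcardB]
end

section
/- (Lonely Path Lemma) Let G be a finite simple graph and C an optimal coloring of G. Suppose {a} and {b} are two distinct singleton color classes of C, and p_a and p_b are vertex-disjoint directed paths in the C-lonely graph L_C(G), starting at a and b respectively, each having at most one vertex in any given color class of C. Then every vertex of p_a is adjacent in G to every vertex of p_b. -/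
open Finset

variable {V : Type*} [Fintype V] [DecidableEq V]

set_option maxHeartbeats 1000000

lemma recolor (G : SimpleGraph V) (C : Finset (Finset V)) (hcol : IsColoring G C)
    (n m : ℕ) (v w : ℕ → V)
    (hv0 : ({v 0} : Finset V) ∈ C) (hw0 : ({w 0} : Finset V) ∈ C)
    (hvchain : ∀ k, k < n → Lonely G C (v k) (v (k+1)))
    (hwchain : ∀ l, l < m → Lonely G C (w l) (w (l+1)))
    (hvinj : ∀ k, k ≤ n → ∀ k', k' ≤ n → ∀ I ∈ C, v k ∈ I → v k' ∈ I → k = k')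
    (hwinj : ∀ l, l ≤ m → ∀ l', l' ≤ m → ∀ I ∈ C, w l ∈ I → w l' ∈ I → l = l')
    (hcross : ∀ k, k ≤ n → ∀ l, l ≤ m → ∀ I ∈ C, v k ∈ I → w l ∉ I)
    (hadj : ¬ G.Adj (v n) (w m)) :
    ∃ C' : Finset (Finset V), IsColoring G C' ∧ C'.card < C.card := by
  have hex := hcol.2.1
  obtain ⟨cls, hclsC, hclsmem, hclsuniq⟩ :
      ∃ cls : V → Finset V, (∀ z, cls z ∈ C) ∧ (∀ z, z ∈ cls z) ∧
        (∀ z I, I ∈ C → z ∈ I → I = cls z) :=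
    ⟨fun z => (hex z).choose, fun z => ((hex z).choose_spec.1).1,
      fun z => ((hex z).choose_spec.1).2,
      fun z I hI hz => (hex z).choose_spec.2 I ⟨hI, hz⟩⟩
  -- lonely facts in terms of cls
  have hlon : ∀ k, k < n → v k ∉ cls (v (k+1)) ∧
      ∀ z ∈ cls (v (k+1)), (G.Adj (v k) z ↔ z = v (k+1)) := by
    intro k hk
    obtain ⟨I, hI, h1, h2, h3⟩ := hvchain k hk
    have e : I = cls (v (k+1)) := hclsuniq _ _ hI h2
    subst e; exact ⟨h1, h3⟩
  have hlonw : ∀ l, l < m → w l ∉ cls (w (l+1)) ∧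
      ∀ z ∈ cls (w (l+1)), (G.Adj (w l) z ↔ z = w (l+1)) := by
    intro l hl
    obtain ⟨I, hI, h1, h2, h3⟩ := hwchain l hl
    have e : I = cls (w (l+1)) := hclsuniq _ _ hI h2
    subst e; exact ⟨h1, h3⟩
  -- basic class facts
  have F2 : ∀ k, k ≤ n → ∀ l, l ≤ m → cls (v k) ≠ cls (w l) := by
    intro k hk l hl he
    exact hcross k hk l hl (cls (v k)) (hclsC _) (hclsmem _) (by rw [he]; exact hclsmem _)
  have F5a : ∀ k, k ≤ n → ∀ l, l ≤ m → v k ∉ cls (w l) := by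
    intro k hk l hl hmem
    exact F2 k hk l hl (hclsuniq _ _ (hclsC _) hmem).symm
  have F5b : ∀ k, k ≤ n → ∀ l, l ≤ m → w l ∉ cls (v k) := by
    intro k hk l hl hmem
    exact hcross k hk l hl _ (hclsC _) (hclsmem _) hmem
  have F3 : ∀ k, k ≤ n → ∀ l, l ≤ m → v k ≠ w l := by
    intro k hk l hl he
    exact F5b k hk l hl (by rw [← he]; exact hclsmem _)
  have F1 : ∀ k, k ≤ n → ∀ k', k' ≤ n → v k ∈ cls (v k') → k = k' := by
    intro k hk k' hk' hmem
    exact hvinj k hk k' hk' _ (hclsC _) hmem (hclsmem _)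
  have F4 : ∀ k, k ≤ n → ∀ k', k' ≤ n → cls (v k) = cls (v k') → k = k' := by
    intro k hk k' hk' he
    exact F1 k hk k' hk' (by rw [← he]; exact hclsmem _)
  have F1w : ∀ l, l ≤ m → ∀ l', l' ≤ m → w l ∈ cls (w l') → l = l' := by
    intro l hl l' hl' hmem
    exact hwinj l hl l' hl' _ (hclsC _) hmem (hclsmem _)
  have F4w : ∀ l, l ≤ m → ∀ l', l' ≤ m → cls (w l) = cls (w l') → l = l' := by
    intro l hl l' hl' he
    exact F1w l hl l' hl' (by rw [← he]; exact hclsmem _)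
  have hv0c : cls (v 0) = ({v 0} : Finset V) :=
    (hclsuniq _ _ hv0 (mem_singleton_self _)).symm
  have hw0c : cls (w 0) = ({w 0} : Finset V) :=
    (hclsuniq _ _ hw0 (mem_singleton_self _)).symm
  have hvw : v n ≠ w m := F3 n le_rfl m le_rfl
  -- the pieces
  set Ka : ℕ → Finset V := fun k => insert (v k) ((cls (v (k+1))).erase (v (k+1))) with hKadef
  set Kb : ℕ → Finset V := fun l => insert (w l) ((cls (w (l+1))).erase (w (l+1))) with hKbdef
  set S : Finset V := {v n, w m} with hSdef
  set Ta := (Finset.range (n+1)).image (fun k => cls (v k)) with hTadef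
  set Tb := (Finset.range (m+1)).image (fun l => cls (w l)) with hTbdef
  set MA := (Finset.range n).image Ka with hMAdef
  set MB := (Finset.range m).image Kb with hMBdef
  set C' := ((C \ (Ta ∪ Tb)) ∪ MA ∪ MB) ∪ {S} with hC'def
  have hKa : ∀ z k, z ∈ Ka k ↔ z = v k ∨ (z ≠ v (k+1) ∧ z ∈ cls (v (k+1))) := by
    intro z k; simp [hKadef, Finset.mem_insert, Finset.mem_erase]
  have hKb : ∀ z l, z ∈ Kb l ↔ z = w l ∨ (z ≠ w (l+1) ∧ z ∈ cls (w (l+1))) := by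
    intro z l; simp [hKbdef, Finset.mem_insert, Finset.mem_erase]
  have hSmem : ∀ z, z ∈ S ↔ z = v n ∨ z = w m := by
    intro z; simp [hSdef]
  have hTa : ∀ I, I ∈ Ta ↔ ∃ k, k ≤ n ∧ cls (v k) = I := by
    intro I; simp [hTadef, Finset.mem_image, Finset.mem_range, Nat.lt_succ_iff]
  have hTb : ∀ I, I ∈ Tb ↔ ∃ l, l ≤ m ∧ cls (w l) = I := by
    intro I; simp [hTbdef, Finset.mem_image, Finset.mem_range, Nat.lt_succ_iff]
  have hmem : ∀ I, I ∈ C' ↔ (I ∈ C ∧ I ∉ Ta ∧ I ∉ Tb) ∨ (∃ k, k < n ∧ Ka k = I) ∨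
      (∃ l, l < m ∧ Kb l = I) ∨ I = S := by
    intro I
    simp only [hC'def, Finset.mem_union, Finset.mem_sdiff, hMAdef, hMBdef,
      Finset.mem_image, Finset.mem_range, Finset.mem_singleton, not_or, or_assoc]
  -- cardinality
  have hTaC : Ta ⊆ C := by
    intro I hI; obtain ⟨k, hk, rfl⟩ := (hTa I).mp hI; exact hclsC _
  have hTbC : Tb ⊆ C := by
    intro I hI; obtain ⟨l, hl, rfl⟩ := (hTb I).mp hI; exact hclsC _
  have hTacard : Ta.card = n + 1 := by
    rw [hTadef, Finset.card_image_of_injOn, Finset.card_range]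
    intro k hk k' hk' he
    simp only [Finset.mem_coe, Finset.mem_range, Nat.lt_succ_iff] at hk hk'
    exact F4 k hk k' hk' he
  have hTbcard : Tb.card = m + 1 := by
    rw [hTbdef, Finset.card_image_of_injOn, Finset.card_range]
    intro l hl l' hl' he
    simp only [Finset.mem_coe, Finset.mem_range, Nat.lt_succ_iff] at hl hl'
    exact F4w l hl l' hl' he
  have hdisjT : Disjoint Ta Tb := by
    rw [Finset.disjoint_left]
    intro I hIa hIb
    obtain ⟨k, hk, rfl⟩ := (hTa I).mp hIa
    obtain ⟨l, hl, he⟩ := (hTb _).mp hIb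
    exact F2 k hk l hl he.symm
  have hsubC : Ta ∪ Tb ⊆ C := Finset.union_subset hTaC hTbC
  have hcardT : (Ta ∪ Tb).card = n + m + 2 := by
    rw [Finset.card_union_of_disjoint hdisjT, hTacard, hTbcard]; omega
  have hlecard : n + m + 2 ≤ C.card := by
    rw [← hcardT]; exact Finset.card_le_card hsubC
  have hcardlt : C'.card < C.card := by
    have h1 : C'.card ≤ (C \ (Ta ∪ Tb)).card + MA.card + MB.card + 1 := by
      calc C'.card ≤ ((C \ (Ta ∪ Tb)) ∪ MA ∪ MB).card + ({S} : Finset (Finset V)).card :=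
            Finset.card_union_le _ _
        _ ≤ ((C \ (Ta ∪ Tb)) ∪ MA).card + MB.card + 1 := by
            rw [Finset.card_singleton]
            exact Nat.add_le_add_right (Finset.card_union_le _ _) 1
        _ ≤ (C \ (Ta ∪ Tb)).card + MA.card + MB.card + 1 := by
            have := Finset.card_union_le (C \ (Ta ∪ Tb)) MA
            omega
    have h2 : (C \ (Ta ∪ Tb)).card = C.card - (n + m + 2) := by
      rw [Finset.card_sdiff_of_subset hsubC, hcardT]
    have h3 : MA.card ≤ n := le_trans (Finset.card_image_le) (by simp)
    have h4 : MB.card ≤ m := le_trans (Finset.card_image_le) (by simp)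
    omega
  refine ⟨C', ?_, hcardlt⟩
  -- uniqueness helpers
  have hUA : ∀ I, I ∈ C → I ∉ Ta → ∀ z, z ∈ I → ∀ k, k < n → z ∈ Ka k → False := by
    intro I hIC hITa z hz k hk hzk
    have hIcls : I = cls z := hclsuniq _ _ hIC hz
    rcases (hKa z k).mp hzk with rfl | ⟨_, hmem'⟩
    · exact hITa ((hTa I).mpr ⟨k, le_of_lt hk, (hIcls).symm⟩)
    · have : cls (v (k+1)) = cls z := hclsuniq _ _ (hclsC _) hmem'
      exact hITa ((hTa I).mpr ⟨k+1, hk, by rw [this, hIcls]⟩)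
  have hUB : ∀ I, I ∈ C → I ∉ Tb → ∀ z, z ∈ I → ∀ l, l < m → z ∈ Kb l → False := by
    intro I hIC hITb z hz l hl hzl
    have hIcls : I = cls z := hclsuniq _ _ hIC hz
    rcases (hKb z l).mp hzl with rfl | ⟨_, hmem'⟩
    · exact hITb ((hTb I).mpr ⟨l, le_of_lt hl, (hIcls).symm⟩)
    · have : cls (w (l+1)) = cls z := hclsuniq _ _ (hclsC _) hmem'
      exact hITb ((hTb I).mpr ⟨l+1, hl, by rw [this, hIcls]⟩)
  have hUS : ∀ I, I ∈ C → I ∉ Ta → I ∉ Tb → ∀ z, z ∈ I → z ∈ S → False := by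
    intro I hIC hITa hITb z hz hzS
    have hIcls : I = cls z := hclsuniq _ _ hIC hz
    rcases (hSmem z).mp hzS with rfl | rfl
    · exact hITa ((hTa I).mpr ⟨n, le_rfl, hIcls.symm⟩)
    · exact hITb ((hTb I).mpr ⟨m, le_rfl, hIcls.symm⟩)
  have hAA : ∀ z k k', k < n → k' < n → z ∈ Ka k → z ∈ Ka k' → k = k' := by
    intro z k k' hk hk' h1 h2
    rcases (hKa z k).mp h1 with he1 | ⟨hne1, hm1⟩
    · rcases (hKa z k').mp h2 with he2 | ⟨hne2, hm2⟩
      · have hvv : v k = v k' := by rw [← he1, ← he2]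
        exact hvinj k hk.le k' hk'.le _ (hclsC (v k')) (by rw [hvv]; exact hclsmem _)
          (hclsmem _)
      · exfalso
        have hkk : k = k' + 1 := F1 k hk.le (k'+1) hk' (by rw [← he1]; exact hm2)
        exact hne2 (by rw [← hkk]; exact he1)
    · rcases (hKa z k').mp h2 with he2 | ⟨hne2, hm2⟩
      · exfalso
        have hkk : k' = k + 1 := F1 k' hk'.le (k+1) hk (by rw [← he2]; exact hm1)
        exact hne1 (by rw [← hkk]; exact he2)
      · have : cls (v (k+1)) = cls (v (k'+1)) :=
          (hclsuniq z _ (hclsC (v (k+1))) hm1).trans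
            (hclsuniq z _ (hclsC (v (k'+1))) hm2).symm
        have := F4 (k+1) hk (k'+1) hk' this
        omega
  have hBB : ∀ z l l', l < m → l' < m → z ∈ Kb l → z ∈ Kb l' → l = l' := by
    intro z l l' hl hl' h1 h2
    rcases (hKb z l).mp h1 with he1 | ⟨hne1, hm1⟩
    · rcases (hKb z l').mp h2 with he2 | ⟨hne2, hm2⟩
      · have hvv : w l = w l' := by rw [← he1, ← he2]
        exact hwinj l hl.le l' hl'.le _ (hclsC (w l')) (by rw [hvv]; exact hclsmem _)
          (hclsmem _)
      · exfalso
        have hkk : l = l' + 1 := F1w l hl.le (l'+1) hl' (by rw [← he1]; exact hm2)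
        exact hne2 (by rw [← hkk]; exact he1)
    · rcases (hKb z l').mp h2 with he2 | ⟨hne2, hm2⟩
      · exfalso
        have hkk : l' = l + 1 := F1w l' hl'.le (l+1) hl (by rw [← he2]; exact hm1)
        exact hne1 (by rw [← hkk]; exact he2)
      · have : cls (w (l+1)) = cls (w (l'+1)) :=
          (hclsuniq z _ (hclsC (w (l+1))) hm1).trans
            (hclsuniq z _ (hclsC (w (l'+1))) hm2).symm
        have := F4w (l+1) hl (l'+1) hl' this
        omega
  have hAB : ∀ z k l, k < n → l < m → z ∈ Ka k → z ∈ Kb l → False := by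
    intro z k l hk hl h1 h2
    rcases (hKa z k).mp h1 with he1 | ⟨hne1, hm1⟩
    · rcases (hKb z l).mp h2 with he2 | ⟨hne2, hm2⟩
      · exact F3 k hk.le l hl.le (by rw [← he1, ← he2])
      · exact F5a k hk.le (l+1) hl (by rw [← he1]; exact hm2)
    · rcases (hKb z l).mp h2 with he2 | ⟨hne2, hm2⟩
      · exact F5b (k+1) hk l hl.le (by rw [← he2]; exact hm1)
      · exact F2 (k+1) hk (l+1) hl ((hclsuniq z _ (hclsC (v (k+1))) hm1).trans
          (hclsuniq z _ (hclsC (w (l+1))) hm2).symm)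
  have hAS : ∀ z k, k < n → z ∈ Ka k → z ∈ S → False := by
    intro z k hk h1 h2
    rcases (hSmem z).mp h2 with he2 | he2
    · rcases (hKa z k).mp h1 with he1 | ⟨hne1, hm1⟩
      · have hvv : v n = v k := by rw [← he2]; exact he1
        have := hvinj n le_rfl k hk.le _ (hclsC (v k)) (by rw [hvv]; exact hclsmem _)
          (hclsmem _)
        omega
      · have hnk : n = k + 1 := F1 n le_rfl (k+1) hk (by rw [← he2]; exact hm1)
        exact hne1 (by rw [← hnk]; exact he2)
    · rcases (hKa z k).mp h1 with he1 | ⟨hne1, hm1⟩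
      · exact F3 k hk.le m le_rfl (by rw [← he1]; exact he2)
      · exact F5b (k+1) hk m le_rfl (by rw [← he2]; exact hm1)
  have hBS : ∀ z l, l < m → z ∈ Kb l → z ∈ S → False := by
    intro z l hl h1 h2
    rcases (hSmem z).mp h2 with he2 | he2
    · rcases (hKb z l).mp h1 with he1 | ⟨hne1, hm1⟩
      · exact F3 n le_rfl l hl.le (by rw [← he2]; exact he1)
      · exact F5a n le_rfl (l+1) hl (by rw [← he2]; exact hm1)
    · rcases (hKb z l).mp h1 with he1 | ⟨hne1, hm1⟩
      · have hvv : w m = w l := by rw [← he2]; exact he1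
        have := hwinj m le_rfl l hl.le _ (hclsC (w l)) (by rw [hvv]; exact hclsmem _)
          (hclsmem _)
        omega
      · have hml : m = l + 1 := F1w m le_rfl (l+1) hl (by rw [← he2]; exact hm1)
        exact hne1 (by rw [← hml]; exact he2)
  -- all distinct classes of C' are disjoint
  have huniq : ∀ I, I ∈ C' → ∀ J, J ∈ C' → ∀ z, z ∈ I → z ∈ J → I = J := by
    intro I hI J hJ z hzI hzJ
    rw [hmem] at hI hJ
    rcases hI with ⟨hIC, hITa, hITb⟩ | ⟨k, hk, rfl⟩ | ⟨l, hl, rfl⟩ | rfl <;>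
      rcases hJ with ⟨hJC, hJTa, hJTb⟩ | ⟨k', hk', rfl⟩ | ⟨l', hl', rfl⟩ | rfl
    · rw [hclsuniq z I hIC hzI, hclsuniq z J hJC hzJ]
    · exact absurd (hUA I hIC hITa z hzI k' hk' hzJ) not_false
    · exact absurd (hUB I hIC hITb z hzI l' hl' hzJ) not_false
    · exact absurd (hUS I hIC hITa hITb z hzI hzJ) not_false
    · exact absurd (hUA J hJC hJTa z hzJ k hk hzI) not_false
    · rw [hAA z k k' hk hk' hzI hzJ]
    · exact absurd (hAB z k l' hk hl' hzI hzJ) not_false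
    · exact absurd (hAS z k hk hzI hzJ) not_false
    · exact absurd (hUB J hJC hJTb z hzJ l hl hzI) not_false
    · exact absurd (hAB z k' l hk' hl hzJ hzI) not_false
    · rw [hBB z l l' hl hl' hzI hzJ]
    · exact absurd (hBS z l hl hzI hzJ) not_false
    · exact absurd (hUS J hJC hJTa hJTb z hzJ hzI) not_false
    · exact absurd (hAS z k' hk' hzJ hzI) not_false
    · exact absurd (hBS z l' hl' hzJ hzI) not_false
    · rfl
  -- existence
  have hexist : ∀ z, ∃ I ∈ C', z ∈ I := by
    intro z
    by_cases hzv : ∃ k, k ≤ n ∧ z = v k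
    · obtain ⟨k, hk, rfl⟩ := hzv
      rcases lt_or_eq_of_le hk with hk' | rfl
      · exact ⟨Ka k, (hmem _).mpr (Or.inr (Or.inl ⟨k, hk', rfl⟩)),
          (hKa _ k).mpr (Or.inl rfl)⟩
      · exact ⟨S, (hmem _).mpr (Or.inr (Or.inr (Or.inr rfl))), (hSmem _).mpr (Or.inl rfl)⟩
    · by_cases hzw : ∃ l, l ≤ m ∧ z = w l
      · obtain ⟨l, hl, rfl⟩ := hzw
        rcases lt_or_eq_of_le hl with hl' | rfl
        · exact ⟨Kb l, (hmem _).mpr (Or.inr (Or.inr (Or.inl ⟨l, hl', rfl⟩))),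
            (hKb _ l).mpr (Or.inl rfl)⟩
        · exact ⟨S, (hmem _).mpr (Or.inr (Or.inr (Or.inr rfl))), (hSmem _).mpr (Or.inr rfl)⟩
      · by_cases hta : cls z ∈ Ta
        · obtain ⟨k, hk, he⟩ := (hTa _).mp hta
          match k, hk, he with
          | 0, hk, he =>
            exfalso
            have : z ∈ ({v 0} : Finset V) := by rw [← hv0c, he]; exact hclsmem z
            exact hzv ⟨0, Nat.zero_le n, Finset.mem_singleton.mp this⟩
          | (k+1), hk, he =>
            refine ⟨Ka k, (hmem _).mpr (Or.inr (Or.inl ⟨k, hk, rfl⟩)), ?_⟩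
            refine (hKa _ k).mpr (Or.inr ⟨fun hzz => hzv ⟨k+1, hk, hzz⟩, ?_⟩)
            rw [he]; exact hclsmem z
        · by_cases htb : cls z ∈ Tb
          · obtain ⟨l, hl, he⟩ := (hTb _).mp htb
            match l, hl, he with
            | 0, hl, he =>
              exfalso
              have : z ∈ ({w 0} : Finset V) := by rw [← hw0c, he]; exact hclsmem z
              exact hzw ⟨0, Nat.zero_le m, Finset.mem_singleton.mp this⟩
            | (l+1), hl, he =>
              refine ⟨Kb l, (hmem _).mpr (Or.inr (Or.inr (Or.inl ⟨l, hl, rfl⟩))), ?_⟩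
              refine (hKb _ l).mpr (Or.inr ⟨fun hzz => hzw ⟨l+1, hl, hzz⟩, ?_⟩)
              rw [he]; exact hclsmem z
          · exact ⟨cls z, (hmem _).mpr (Or.inl ⟨hclsC z, hta, htb⟩), hclsmem z⟩
  refine ⟨?_, ?_, ?_⟩
  · -- nonempty
    intro I hI
    rcases (hmem I).mp hI with ⟨hIC, _, _⟩ | ⟨k, hk, rfl⟩ | ⟨l, hl, rfl⟩ | rfl
    · exact hcol.1 I hIC
    · exact ⟨v k, (hKa _ k).mpr (Or.inl rfl)⟩
    · exact ⟨w l, (hKb _ l).mpr (Or.inl rfl)⟩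
    · exact ⟨v n, (hSmem _).mpr (Or.inl rfl)⟩
  · -- partition
    intro z
    obtain ⟨I, hI, hzI⟩ := hexist z
    exact ⟨I, ⟨hI, hzI⟩, fun J hJ => huniq J hJ.1 I hI z hJ.2 hzI⟩
  · -- independence
    intro I hI p hp q hq hpq
    rcases (hmem I).mp hI with ⟨hIC, _, _⟩ | ⟨k, hk, rfl⟩ | ⟨l, hl, rfl⟩ | rfl
    · exact hcol.2.2 I hIC p hp q hq hpq
    · rcases (hKa p k).mp hp with rfl | ⟨hpne, hpm⟩ <;>
        rcases (hKa q k).mp hq with he | ⟨hqne, hqm⟩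
      · rw [he] at hpq; exact G.irrefl hpq
      · exact hqne (((hlon k hk).2 q hqm).mp hpq)
      · rw [he] at hpq
        exact hpne (((hlon k hk).2 p hpm).mp hpq.symm)
      · exact hcol.2.2 _ (hclsC (v (k+1))) p hpm q hqm hpq
    · rcases (hKb p l).mp hp with rfl | ⟨hpne, hpm⟩ <;>
        rcases (hKb q l).mp hq with he | ⟨hqne, hqm⟩
      · rw [he] at hpq; exact G.irrefl hpq
      · exact hqne (((hlonw l hl).2 q hqm).mp hpq)
      · rw [he] at hpq
        exact hpne (((hlonw l hl).2 p hpm).mp hpq.symm)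
      · exact hcol.2.2 _ (hclsC (w (l+1))) p hpm q hqm hpq
    · rcases (hSmem p).mp hp with rfl | rfl <;> rcases (hSmem q).mp hq with rfl | rfl
      · exact G.irrefl hpq
      · exact hadj hpq
      · exact hadj hpq.symm
      · exact G.irrefl hpq

theorem statement_1 (G : SimpleGraph V) (C : Finset (Finset V))
    (hC : IsOptimalColoring G C)
    (a b : V) (hab : a ≠ b) (ha : ({a} : Finset V) ∈ C) (hb : ({b} : Finset V) ∈ C)
    (pa pb : List V)
    (hpa : IsLonelyPath G C pa) (hpb : IsLonelyPath G C pb)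
    (hheada : pa.head? = some a) (hheadb : pb.head? = some b)
    (hclassa : ∀ I ∈ C, ∀ x ∈ pa, ∀ y ∈ pa, x ∈ I → y ∈ I → x = y)
    (hclassb : ∀ I ∈ C, ∀ x ∈ pb, ∀ y ∈ pb, x ∈ I → y ∈ I → x = y)
    (hdisj : ∀ x ∈ pa, x ∉ pb) :
    ∀ x ∈ pa, ∀ y ∈ pb, G.Adj x y := by
  obtain ⟨hcol, hcard⟩ := hC
  have hane : pa ≠ [] := hpa.1
  have hbne : pb ≠ [] := hpb.1
  have halen : 0 < pa.length := List.length_pos_iff.mpr hane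
  have hblen : 0 < pb.length := List.length_pos_iff.mpr hbne
  have ha0 : pa[0] = a := by
    rw [List.head?_eq_head hane, List.head_eq_getElem] at hheada
    exact Option.some.inj hheada
  have hb0 : pb[0] = b := by
    rw [List.head?_eq_head hbne, List.head_eq_getElem] at hheadb
    exact Option.some.inj hheadb
  have hchaina : ∀ k (hk : k + 1 < pa.length), Lonely G C (pa[k]'(by omega)) (pa[k+1]'hk) := by
    intro k hk
    have := List.isChain_iff_getElem.mp hpa.2.2 k (by omega)
    simpa using this
  have hchainb : ∀ l (hl : l + 1 < pb.length), Lonely G C (pb[l]'(by omega)) (pb[l+1]'hl) := by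
    intro l hl
    have := List.isChain_iff_getElem.mp hpb.2.2 l (by omega)
    simpa using this
  have key : ∀ N i j, ∀ (hi : i < pa.length) (hj : j < pb.length), i + j = N →
      G.Adj (pa[i]'hi) (pb[j]'hj) := by
    intro N
    induction N using Nat.strong_induction_on with
    | _ N IH =>
    intro i j hi hj hij
    by_contra hadj
    by_cases hsame : ∃ I ∈ C, pa[i] ∈ I ∧ pb[j] ∈ I
    · obtain ⟨I, hIC, hxI, hyI⟩ := hsame
      by_cases hi0 : i = 0
      · subst hi0
        have hxa : a ∈ I := by rw [← ha0]; exact hxI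
        have hIa : I = {a} :=
          (hcol.2.1 a).unique ⟨hIC, hxa⟩ ⟨ha, Finset.mem_singleton_self a⟩
        rw [hIa, Finset.mem_singleton] at hyI
        exact hdisj a (by rw [← ha0]; exact List.getElem_mem hi)
          (by rw [← hyI]; exact List.getElem_mem hj)
      · obtain ⟨i', rfl⟩ : ∃ i', i = i' + 1 := ⟨i - 1, by omega⟩
        obtain ⟨I', hI'C, hnot, hmem', hiff⟩ := hchaina i' hi
        have hII : I = I' := (hcol.2.1 (pa[i'+1])).unique ⟨hIC, hxI⟩ ⟨hI'C, hmem'⟩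
        have hadj' : G.Adj (pa[i']'(by omega)) (pb[j]'hj) :=
          IH (i' + j) (by omega) i' j (by omega) hj rfl
        have he : pb[j] = pa[i'+1] := (hiff _ (hII ▸ hyI)).mp hadj'
        exact hdisj _ (List.getElem_mem hi) (he ▸ List.getElem_mem hj)
    · set vv : ℕ → V := fun k => pa.getD k a with hvvdef
      set ww : ℕ → V := fun l => pb.getD l b with hwwdef
      have hvgetd : ∀ k (hk : k < pa.length), vv k = pa[k]'hk :=
        fun k hk => List.getD_eq_getElem pa a hk
      have hwgetd : ∀ l (hl : l < pb.length), ww l = pb[l]'hl :=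
        fun l hl => List.getD_eq_getElem pb b hl
      have h1 : ({vv 0} : Finset V) ∈ C := by rw [hvgetd 0 halen, ha0]; exact ha
      have h2 : ({ww 0} : Finset V) ∈ C := by rw [hwgetd 0 hblen, hb0]; exact hb
      have h3 : ∀ k, k < i → Lonely G C (vv k) (vv (k+1)) := by
        intro k hk
        rw [hvgetd k (by omega), hvgetd (k+1) (by omega)]
        exact hchaina k (by omega)
      have h4 : ∀ l, l < j → Lonely G C (ww l) (ww (l+1)) := by
        intro l hl
        rw [hwgetd l (by omega), hwgetd (l+1) (by omega)]
        exact hchainb l (by omega)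
      have h5 : ∀ k, k ≤ i → ∀ k', k' ≤ i → ∀ I ∈ C, vv k ∈ I → vv k' ∈ I → k = k' := by
        intro k hk k' hk' I hI hm1 hm2
        rw [hvgetd k (by omega)] at hm1
        rw [hvgetd k' (by omega)] at hm2
        have := hclassa I hI _ (List.getElem_mem (by omega)) _
          (List.getElem_mem (by omega)) hm1 hm2
        exact (List.Nodup.getElem_inj_iff hpa.2.1).mp this
      have h6 : ∀ l, l ≤ j → ∀ l', l' ≤ j → ∀ I ∈ C, ww l ∈ I → ww l' ∈ I → l = l' := by
        intro l hl l' hl' I hI hm1 hm2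
        rw [hwgetd l (by omega)] at hm1
        rw [hwgetd l' (by omega)] at hm2
        have := hclassb I hI _ (List.getElem_mem (by omega)) _
          (List.getElem_mem (by omega)) hm1 hm2
        exact (List.Nodup.getElem_inj_iff hpb.2.1).mp this
      have h7 : ∀ k, k ≤ i → ∀ l, l ≤ j → ∀ I ∈ C, vv k ∈ I → ww l ∉ I := by
        intro k hk l hl I hI hm1 hm2
        rw [hvgetd k (by omega)] at hm1
        rw [hwgetd l (by omega)] at hm2
        by_cases hkl : k = i ∧ l = j
        · obtain ⟨rfl, rfl⟩ := hkl
          exact hsame ⟨I, hI, hm1, hm2⟩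
        · have hadj2 : G.Adj pa[k] pb[l] :=
            IH (k + l) (by omega) k l (by omega) (by omega) rfl
          exact hcol.2.2 I hI _ hm1 _ hm2 hadj2
      have h8 : ¬ G.Adj (vv i) (ww j) := by
        rw [hvgetd i hi, hwgetd j hj]; exact hadj
      obtain ⟨C', hC', hlt⟩ := recolor G C hcol i j vv ww h1 h2 h3 h4 h5 h6 h7 h8
      have hle : chi G ≤ C'.card := Nat.sInf_le ⟨C', hC', rfl⟩
      rw [hcard] at hlt
      omega
  intro x hx y hy
  obtain ⟨i, hi, rfl⟩ := List.mem_iff_getElem.mp hx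
  obtain ⟨j, hj, rfl⟩ := List.mem_iff_getElem.mp hy
  exact key (i + j) i j hi hj rfl
end

section
/- Let t be an integer and G a finite simple graph with χ(G) > (ω(G) + Δ(G) + 1)/2 + t, and let C = {I_1, …, I_m} be an optimal coloring of G. Then for each j with 1 ≤ j ≤ m there exists a vertex v_j ∈ I_j such that |L_C(v_j)| ≥ ω(G) + 2t. -/
open Finset

variable {V : Type*} [Fintype V] [DecidableEq V]

/-- Classes of a coloring are pairwise disjoint. -/
lemma classes_disjoint {G : SimpleGraph V} {C : Finset (Finset V)}
    (hC : IsColoring G C) {J K : Finset V} (hJ : J ∈ C) (hK : K ∈ C) (hne : J ≠ K) :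
    ∀ x, x ∈ J → x ∉ K := by
  intro x hxJ hxK
  obtain ⟨I, _, hIuniq⟩ := hC.2.1 x
  exact hne ((hIuniq J ⟨hJ, hxJ⟩).trans (hIuniq K ⟨hK, hxK⟩).symm)

/-- In an optimal coloring, each class contains a vertex with a neighbor in every other class. -/
lemma exists_dominating {G : SimpleGraph V} {C : Finset (Finset V)}
    (hC : IsOptimalColoring G C) {I : Finset V} (hI : I ∈ C) :
    ∃ v ∈ I, ∀ J ∈ C, J ≠ I → ∃ w ∈ J, G.Adj v w := by
  classical
  obtain ⟨⟨hne, huniq, hindep⟩, hcard⟩ := hC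
  by_contra hcon
  push_neg at hcon
  have hg : ∀ v : V, ∃ J : Finset V, v ∈ I → (J ∈ C ∧ J ≠ I ∧ ∀ w ∈ J, ¬ G.Adj v w) := by
    intro v
    by_cases hv : v ∈ I
    · obtain ⟨J, hJC, hJne, hJw⟩ := hcon v hv
      exact ⟨J, fun _ => ⟨hJC, hJne, fun w hw hadj => (hJw w hw hadj).elim⟩⟩
    · exact ⟨∅, fun h => absurd h hv⟩
  choose g hg using hg
  set C' : Finset (Finset V) :=
    (C.erase I).image (fun J => J ∪ (I.filter fun v => g v = J)) with hC'def
  have hdisj : ∀ {J K : Finset V}, J ∈ C → K ∈ C → J ≠ K → ∀ x, x ∈ J → x ∉ K :=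
    fun hJ hK hne' => classes_disjoint ⟨hne, huniq, hindep⟩ hJ hK hne'
  -- membership characterization
  have hmem : ∀ x : V, ∀ J ∈ C.erase I,
      (x ∈ J ∪ (I.filter fun v => g v = J) ↔ (x ∈ J ∨ (x ∈ I ∧ g x = J))) := by
    intro x J hJ
    simp [Finset.mem_union, Finset.mem_filter]
  have hcol : IsColoring G C' := by
    refine ⟨?_, ?_, ?_⟩
    · intro K hK
      obtain ⟨J, hJ, rfl⟩ := Finset.mem_image.mp hK
      obtain ⟨w, hw⟩ := hne J (Finset.mem_of_mem_erase hJ)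
      exact ⟨w, Finset.mem_union_left _ hw⟩
    · intro x
      by_cases hx : x ∈ I
      · obtain ⟨hgC, hgne, _⟩ := hg x hx
        have hgE : g x ∈ C.erase I := Finset.mem_erase.mpr ⟨hgne, hgC⟩
        refine ⟨g x ∪ (I.filter fun v => g v = g x), ⟨Finset.mem_image_of_mem _ hgE,
          (hmem x _ hgE).mpr (Or.inr ⟨hx, rfl⟩)⟩, ?_⟩
        rintro K ⟨hK, hxK⟩
        obtain ⟨J, hJ, rfl⟩ := Finset.mem_image.mp hK
        rcases (hmem x J hJ).mp hxK with hxJ | ⟨_, hgx⟩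
        · exact absurd hx (hdisj (Finset.mem_of_mem_erase hJ) hI
            (Finset.mem_erase.mp hJ).1 x hxJ)
        · rw [hgx]
      · obtain ⟨J, ⟨hJC, hxJ⟩, hJuniq⟩ := huniq x
        have hJne : J ≠ I := fun h => hx (h ▸ hxJ)
        have hJE : J ∈ C.erase I := Finset.mem_erase.mpr ⟨hJne, hJC⟩
        refine ⟨J ∪ (I.filter fun v => g v = J), ⟨Finset.mem_image_of_mem _ hJE,
          (hmem x J hJE).mpr (Or.inl hxJ)⟩, ?_⟩
        rintro K ⟨hK, hxK⟩
        obtain ⟨J', hJ', rfl⟩ := Finset.mem_image.mp hK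
        rcases (hmem x J' hJ').mp hxK with hxJ' | ⟨hxI, _⟩
        · rw [hJuniq J' ⟨Finset.mem_of_mem_erase hJ', hxJ'⟩]
        · exact absurd hxI hx
    · intro K hK v hv w hw hadj
      obtain ⟨J, hJ, rfl⟩ := Finset.mem_image.mp hK
      have hJC := Finset.mem_of_mem_erase hJ
      rcases (hmem v J hJ).mp hv with hvJ | ⟨hvI, hgv⟩ <;>
        rcases (hmem w J hJ).mp hw with hwJ | ⟨hwI, hgw⟩
      · exact hindep J hJC v hvJ w hwJ hadj
      · exact (hg w hwI).2.2 v (hgw ▸ hvJ) hadj.symm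
      · exact (hg v hvI).2.2 w (hgv ▸ hwJ) hadj
      · exact hindep I hI v hvI w hwI hadj
  have hCpos : 0 < C.card := Finset.card_pos.mpr ⟨I, hI⟩
  have hle : chi G ≤ C'.card := Nat.sInf_le ⟨C', hcol, rfl⟩
  have hle2 : C'.card ≤ C.card - 1 := by
    calc C'.card ≤ (C.erase I).card := Finset.card_image_le
    _ = C.card - 1 := Finset.card_erase_of_mem hI
  omega

theorem statement_3 (G : SimpleGraph V) [DecidableRel G.Adj] (t : ℤ)
    (h : ((G.cliqueNum : ℝ) + G.maxDegree + 1) / 2 + t < (chi G : ℝ))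
    (C : Finset (Finset V)) (hC : IsOptimalColoring G C) :
    ∀ I ∈ C, ∃ v ∈ I,
      (G.cliqueNum : ℤ) + 2 * t ≤ (({u | Lonely G C v u} : Set V).ncard : ℤ) := by
  classical
  intro I hI
  obtain ⟨v, hvI, hvdom⟩ := exists_dominating hC hI
  obtain ⟨⟨hne, huniq, hindep⟩, hcard⟩ := hC
  have hdisj : ∀ {J K : Finset V}, J ∈ C → K ∈ C → J ≠ K → ∀ x, x ∈ J → x ∉ K :=
    fun hJ hK hne' => classes_disjoint ⟨hne, huniq, hindep⟩ hJ hK hne'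
  refine ⟨v, hvI, ?_⟩
  set D : Finset (Finset V) := C.erase I with hD
  set n : Finset V → ℕ := fun J => (J.filter fun x => G.Adj v x).card with hn
  -- v not in any class of D
  have hvnot : ∀ J ∈ D, v ∉ J := fun J hJ =>
    hdisj hI (Finset.mem_of_mem_erase hJ) (Finset.mem_erase.mp hJ).1.symm v hvI
  -- degree of v equals sum of n over D
  have hNbr : G.neighborFinset v = D.biUnion (fun J => J.filter fun x => G.Adj v x) := by
    ext x
    simp only [SimpleGraph.mem_neighborFinset, Finset.mem_biUnion, Finset.mem_filter]
    constructor
    · intro hadj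
      obtain ⟨J, ⟨hJC, hxJ⟩, _⟩ := huniq x
      have hJne : J ≠ I := by
        rintro rfl
        exact hindep J hJC v hvI x hxJ hadj
      exact ⟨J, Finset.mem_erase.mpr ⟨hJne, hJC⟩, hxJ, hadj⟩
    · rintro ⟨J, _, _, hadj⟩
      exact hadj
  have hdeg : G.degree v = ∑ J ∈ D, n J := by
    rw [← SimpleGraph.card_neighborFinset_eq_degree, hNbr]
    refine Finset.card_biUnion ?_
    intro J hJ K hK hJK
    simp only [Finset.disjoint_left, Finset.mem_filter]
    rintro x ⟨hxJ, -⟩ ⟨hxK, -⟩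
    exact hdisj (Finset.mem_of_mem_erase hJ) (Finset.mem_of_mem_erase hK) hJK x hxJ hxK
  set Dl : Finset (Finset V) := D.filter (fun J => n J = 1) with hDl
  have hDlD : Dl ⊆ D := Finset.filter_subset _ _
  -- each class in D has n J ≥ 1; classes not in Dl have n J ≥ 2
  have hn1 : ∀ J ∈ D, 1 ≤ n J := by
    intro J hJ
    obtain ⟨w, hwJ, hadj⟩ := hvdom J (Finset.mem_of_mem_erase hJ) (Finset.mem_erase.mp hJ).1
    exact Finset.card_pos.mpr ⟨w, Finset.mem_filter.mpr ⟨hwJ, hadj⟩⟩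
  have hsum : 1 * Dl.card + 2 * (D \ Dl).card ≤ ∑ J ∈ D, n J := by
    rw [← Finset.sum_sdiff hDlD]
    have hA : (D \ Dl).card • 2 ≤ ∑ J ∈ D \ Dl, n J := by
      refine Finset.card_nsmul_le_sum _ _ _ ?_
      intro J hJ
      exact Nat.succ_le_of_lt (Nat.lt_of_le_of_ne (hn1 J (Finset.mem_sdiff.mp hJ).1)
        (fun hh => (Finset.mem_sdiff.mp hJ).2
          (Finset.mem_filter.mpr ⟨(Finset.mem_sdiff.mp hJ).1, hh.symm⟩)))
    have hB : Dl.card • 1 ≤ ∑ J ∈ Dl, n J := by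
      refine Finset.card_nsmul_le_sum _ _ _ ?_
      intro J hJ
      exact hn1 J (hDlD hJ)
    simp only [smul_eq_mul] at hA hB
    omega
  have hsd : (D \ Dl).card = D.card - Dl.card := Finset.card_sdiff_of_subset hDlD
  have hDcard : D.card = C.card - 1 := Finset.card_erase_of_mem hI
  have hCpos : 0 < C.card := Finset.card_pos.mpr ⟨I, hI⟩
  have hmax : G.degree v ≤ G.maxDegree := G.degree_le_maxDegree v
  -- the lonely set contains W
  set W : Finset V := Dl.biUnion (fun J => J.filter fun x => G.Adj v x) with hW
  have hWcard : W.card = Dl.card := by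
    rw [Finset.card_biUnion]
    · rw [Finset.sum_congr rfl (fun J hJ => (Finset.mem_filter.mp hJ).2)]
      simp [hDl]
    · intro J hJ K hK hJK
      simp only [Finset.disjoint_left, Finset.mem_filter]
      rintro x ⟨hxJ, -⟩ ⟨hxK, -⟩
      exact hdisj (Finset.mem_of_mem_erase (hDlD hJ))
        (Finset.mem_of_mem_erase (hDlD hK)) hJK x hxJ hxK
  have hWsub : (W : Set V) ⊆ {u | Lonely G C v u} := by
    intro u hu
    rw [Finset.mem_coe] at hu
    obtain ⟨J, hJ, hufilt⟩ := Finset.mem_biUnion.mp hu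
    obtain ⟨huJ, hadj⟩ := Finset.mem_filter.mp hufilt
    have hJD := hDlD hJ
    have hcard1 : (J.filter fun x => G.Adj v x) = {u} := by
      have h1 : (J.filter fun x => G.Adj v x).card = 1 := (Finset.mem_filter.mp hJ).2
      obtain ⟨a, ha⟩ := Finset.card_eq_one.mp h1
      have : u = a := by
        have := Finset.mem_filter.mpr ⟨huJ, hadj⟩
        rw [ha] at this
        exact Finset.mem_singleton.mp this
      rw [ha, this]
    refine ⟨J, Finset.mem_of_mem_erase hJD, hvnot J hJD, huJ, ?_⟩
    intro x hxJ
    constructor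
    · intro hadjx
      have : x ∈ ({u} : Finset V) := hcard1 ▸ Finset.mem_filter.mpr ⟨hxJ, hadjx⟩
      exact Finset.mem_singleton.mp this
    · rintro rfl
      exact hadj
  have hncard : Dl.card ≤ ({u | Lonely G C v u} : Set V).ncard := by
    rw [← hWcard, ← Set.ncard_coe_finset]
    exact Set.ncard_le_ncard hWsub (Set.toFinite _)
  -- arithmetic
  have h2 : (G.cliqueNum : ℝ) + G.maxDegree + 1 + 2 * t < 2 * chi G := by linarith
  have h3 : (G.cliqueNum : ℤ) + G.maxDegree + 1 + 2 * t < 2 * chi G := by exact_mod_cast h2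
  have hchain : Dl.card + 2 * (D.card - Dl.card) ≤ G.maxDegree := by
    calc Dl.card + 2 * (D.card - Dl.card) = 1 * Dl.card + 2 * (D \ Dl).card := by
          rw [hsd]; ring
    _ ≤ ∑ J ∈ D, n J := hsum
    _ = G.degree v := hdeg.symm
    _ ≤ G.maxDegree := hmax
  have hle : Dl.card ≤ D.card := Finset.card_le_card hDlD
  omega
end

section
/- If G is a finite simple graph with ι(G) > ω(G)/2, then χ(G) ≤ (ω(G) + Δ(G) + 1)/2. -/
open Finset

variable {V : Type*} [Fintype V] [DecidableEq V]

set_option linter.unusedSectionVars false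
set_option linter.unusedVariables false

section AuxProof
section Lemmas
variable {G : SimpleGraph V} {C : Finset (Finset V)}

lemma auxMemUnique (hC : IsColoring G C) {I J : Finset V} {v : V}
    (hI : I ∈ C) (hJ : J ∈ C) (hvI : v ∈ I) (hvJ : v ∈ J) : I = J := by
  obtain ⟨-, h, -⟩ := hC
  obtain ⟨K, -, hu⟩ := h v
  rw [hu I ⟨hI, hvI⟩, hu J ⟨hJ, hvJ⟩]

lemma auxChiLe (hC : IsColoring G C) : chi G ≤ C.card :=
  Nat.sInf_le ⟨C, hC, rfl⟩

lemma auxColoringSingletons : IsColoring G ((univ : Finset V).image fun v => ({v} : Finset V)) := by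
  refine ⟨?_, ?_, ?_⟩
  · intro I hI
    simp only [mem_image] at hI
    obtain ⟨v, -, rfl⟩ := hI
    exact ⟨v, mem_singleton_self v⟩
  · intro v
    refine ⟨{v}, ⟨mem_image_of_mem _ (mem_univ v), mem_singleton_self v⟩, ?_⟩
    rintro I ⟨hI, hvI⟩
    simp only [mem_image] at hI
    obtain ⟨w, -, rfl⟩ := hI
    rw [mem_singleton] at hvI
    rw [hvI]
  · intro I hI v hv w hw
    simp only [mem_image] at hI
    obtain ⟨u, -, rfl⟩ := hI
    rw [mem_singleton] at hv hw
    subst hv; subst hw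
    exact G.loopless.irrefl _

lemma auxExistsOptimal (G : SimpleGraph V) : ∃ C : Finset (Finset V), IsOptimalColoring G C := by
  have : chi G ∈ {n | ∃ C : Finset (Finset V), IsColoring G C ∧ C.card = n} :=
    Nat.sInf_mem ⟨_, ⟨_, auxColoringSingletons, rfl⟩⟩
  obtain ⟨C, hC, hcard⟩ := this
  exact ⟨C, hC, hcard⟩

lemma auxStinginessAttained (G : SimpleGraph V) :
    ∃ C : Finset (Finset V), IsOptimalColoring G C ∧
      (C.filter fun I => I.card = 1).card = stinginess G := by
  have hne : {n | ∃ C : Finset (Finset V), IsOptimalColoring G C ∧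
      (C.filter fun I => I.card = 1).card = n}.Nonempty := by
    obtain ⟨C, hC⟩ := auxExistsOptimal G
    exact ⟨_, C, hC, rfl⟩
  have hbdd : BddAbove {n | ∃ C : Finset (Finset V), IsOptimalColoring G C ∧
      (C.filter fun I => I.card = 1).card = n} := by
    refine ⟨Fintype.card (Finset V), ?_⟩
    rintro n ⟨C, -, rfl⟩
    exact le_trans (card_le_card (filter_subset _ _)) (card_le_univ C)
  exact Nat.sSup_mem hne hbdd
end Lemmas

section Recolor
variable {G : SimpleGraph V} {C : Finset (Finset V)}

lemma auxRecolor (hC : IsColoring G C) (D E : Finset (Finset V)) (hD : D ⊆ C)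
    (hcov : ∀ v : V, (∃ I ∈ D, v ∈ I) ↔ ∃ I ∈ E, v ∈ I)
    (hne : ∀ I ∈ E, I.Nonempty)
    (hind : ∀ I ∈ E, ∀ v ∈ I, ∀ w ∈ I, ¬ G.Adj v w)
    (hdisj : ∀ I ∈ E, ∀ J ∈ E, I ≠ J → ∀ v, v ∈ I → v ∈ J → False) :
    IsColoring G (C \ D ∪ E) ∧ (C \ D ∪ E).card = C.card - D.card + E.card := by
  obtain ⟨hCne, hCpart, hCind⟩ := hC
  -- a class in C \ D cannot contain a vertex covered by D
  have hkey : ∀ I ∈ C \ D, ∀ v ∈ I, ¬ (∃ J ∈ D, v ∈ J) := by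
    rintro I hI v hv ⟨J, hJ, hvJ⟩
    rw [mem_sdiff] at hI
    have := auxMemUnique ⟨hCne, hCpart, hCind⟩ hI.1 (hD hJ) hv hvJ
    exact hI.2 (this ▸ hJ)
  have hsep : ∀ I ∈ C \ D, ∀ J ∈ E, ∀ v, v ∈ I → v ∈ J → False := by
    intro I hI J hJ v hvI hvJ
    exact hkey I hI v hvI ((hcov v).2 ⟨J, hJ, hvJ⟩)
  have hdisjoint : Disjoint (C \ D) E := by
    rw [disjoint_left]
    intro I hI hIE
    obtain ⟨v, hv⟩ := hne I hIE
    exact hsep I hI I hIE v hv hv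
  constructor
  · refine ⟨?_, ?_, ?_⟩
    · intro I hI
      rcases mem_union.1 hI with h | h
      · exact hCne I (mem_sdiff.1 h).1
      · exact hne I h
    · intro v
      obtain ⟨K, ⟨hK, hvK⟩, huK⟩ := hCpart v
      by_cases hKD : K ∈ D
      · obtain ⟨I, hIE, hvI⟩ := (hcov v).1 ⟨K, hKD, hvK⟩
        refine ⟨I, ⟨mem_union_right _ hIE, hvI⟩, ?_⟩
        rintro J ⟨hJ, hvJ⟩
        rcases mem_union.1 hJ with h | h
        · exact absurd ⟨K, hKD, hvK⟩ (hkey J h v hvJ)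
        · by_contra hne'
          exact hdisj J h I hIE hne' v hvJ hvI
      · refine ⟨K, ⟨mem_union_left _ (mem_sdiff.2 ⟨hK, hKD⟩), hvK⟩, ?_⟩
        rintro J ⟨hJ, hvJ⟩
        rcases mem_union.1 hJ with h | h
        · exact huK J ⟨(mem_sdiff.1 h).1, hvJ⟩
        · exact absurd hvK (fun hvK => hsep K (mem_sdiff.2 ⟨hK, hKD⟩) J h v hvK hvJ)
    · intro I hI
      rcases mem_union.1 hI with h | h
      · exact hCind I (mem_sdiff.1 h).1
      · exact hind I h
  · rw [card_union_of_disjoint hdisjoint, card_sdiff_of_subset hD]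
end Recolor

section Structural
variable {G : SimpleGraph V} {C : Finset (Finset V)} {I J : Finset V} {z z' : V}

lemma auxClassDisj (hC : IsColoring G C) (hI : I ∈ C) (hJ : J ∈ C) (hne : I ≠ J) :
    ∀ x, x ∈ I → x ∈ J → False :=
  fun x hxI hxJ => hne (auxMemUnique hC hI hJ hxI hxJ)

lemma auxNotMemClass (hC : IsColoring G C) (hz : ({z} : Finset V) ∈ C) (hI : I ∈ C)
    (hIz : I ≠ {z}) : z ∉ I :=
  fun h => auxClassDisj hC hI hz hIz z h (mem_singleton_self z)

lemma auxPairSubset (hz : ({z} : Finset V) ∈ C) (hI : I ∈ C) :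
    ({({z} : Finset V), I} : Finset (Finset V)) ⊆ C := by
  intro K hK
  rcases mem_insert.1 hK with h | h
  · rw [h]; exact hz
  · rw [mem_singleton.1 h]; exact hI

/-- L1: a singleton vertex has a neighbor in every other color class. -/
lemma auxExistsAdj (hC : IsOptimalColoring G C) (hz : ({z} : Finset V) ∈ C)
    (hI : I ∈ C) (hIz : I ≠ {z}) : ∃ w ∈ I, G.Adj z w := by
  by_contra hn
  push_neg at hn
  have hD := auxPairSubset hz hI
  obtain ⟨hC', hcard⟩ := auxRecolor hC.1 {({z} : Finset V), I} {insert z I} hD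
    (by
      intro u
      constructor
      · rintro ⟨K, hK, hu⟩
        refine ⟨insert z I, mem_singleton.2 rfl, ?_⟩
        rcases mem_insert.1 hK with h | h
        · rw [h] at hu; exact mem_insert.2 (Or.inl (mem_singleton.1 hu))
        · rw [mem_singleton.1 h] at hu; exact mem_insert_of_mem hu
      · rintro ⟨K, hK, hu⟩
        rw [mem_singleton.1 hK] at hu
        rcases mem_insert.1 hu with h | h
        · exact ⟨{z}, mem_insert_self _ _, by rw [h]; exact mem_singleton_self z⟩
        · exact ⟨I, mem_insert_of_mem (mem_singleton_self I), h⟩)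
    (by
      intro K hK
      rw [mem_singleton.1 hK]
      exact ⟨z, mem_insert_self z I⟩)
    (by
      intro K hK x hx y hy
      rw [mem_singleton.1 hK] at hx hy
      rcases mem_insert.1 hx with h1 | h1 <;> rcases mem_insert.1 hy with h2 | h2
      · rw [h1, h2]; exact G.loopless.irrefl z
      · rw [h1]; exact hn y h2
      · rw [h2]; exact fun h => hn x h1 h.symm
      · exact hC.1.2.2 I hI x h1 y h2)
    (by
      intro K hK L hL hne
      rw [mem_singleton.1 hK, mem_singleton.1 hL] at hne
      exact absurd rfl hne)
  have h2 : ({({z} : Finset V), I} : Finset (Finset V)).card = 2 := by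
    rw [card_insert_of_notMem (by simpa using fun h => hIz h.symm), card_singleton]
  have hle := auxChiLe hC'
  rw [hcard, h2, card_singleton, hC.2] at hle
  have hge : 2 ≤ chi G := by
    have := card_le_card hD
    rwa [h2, hC.2] at this
  omega

/-- L2: two singleton classes in an optimal coloring are adjacent. -/
lemma auxAdjSingletons (hC : IsOptimalColoring G C) (hz : ({z} : Finset V) ∈ C)
    (hz' : ({z'} : Finset V) ∈ C) (hne : z ≠ z') : G.Adj z z' := by
  by_contra hn
  have hss : ({z} : Finset V) ≠ {z'} := by
    simp only [ne_eq, Finset.singleton_inj]; exact hne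
  have hD := auxPairSubset hz hz'
  obtain ⟨hC', hcard⟩ := auxRecolor hC.1 {({z} : Finset V), {z'}} {({z, z'} : Finset V)} hD
    (by
      intro u
      constructor
      · rintro ⟨K, hK, hu⟩
        refine ⟨{z, z'}, mem_singleton.2 rfl, ?_⟩
        rcases mem_insert.1 hK with h | h
        · rw [h] at hu; exact mem_insert.2 (Or.inl (mem_singleton.1 hu))
        · rw [mem_singleton.1 h] at hu
          exact mem_insert_of_mem hu
      · rintro ⟨K, hK, hu⟩
        rw [mem_singleton.1 hK] at hu
        rcases mem_insert.1 hu with h | h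
        · exact ⟨{z}, mem_insert_self _ _, by rw [h]; exact mem_singleton_self z⟩
        · exact ⟨{z'}, mem_insert_of_mem (mem_singleton_self _), h⟩)
    (by
      intro K hK
      rw [mem_singleton.1 hK]
      exact ⟨z, mem_insert_self _ _⟩)
    (by
      intro K hK x hx y hy
      rw [mem_singleton.1 hK] at hx hy
      rcases mem_insert.1 hx with h1 | h1 <;> rcases mem_insert.1 hy with h2 | h2
      · rw [h1, h2]; exact G.loopless.irrefl z
      · rw [h1, mem_singleton.1 h2]; exact hn
      · rw [mem_singleton.1 h1, h2]; exact fun h => hn h.symm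
      · rw [mem_singleton.1 h1, mem_singleton.1 h2]; exact G.loopless.irrefl z')
    (by
      intro K hK L hL hne'
      rw [mem_singleton.1 hK, mem_singleton.1 hL] at hne'
      exact absurd rfl hne')
  have h2 : ({({z} : Finset V), ({z'} : Finset V)} : Finset (Finset V)).card = 2 := by
    rw [card_insert_of_notMem (by simpa using hss), card_singleton]
  have hle := auxChiLe hC'
  rw [hcard, h2, card_singleton, hC.2] at hle
  have hge : 2 ≤ chi G := by
    have := card_le_card hD
    rwa [h2, hC.2] at this
  omega

/-- L3: the unique neighbor of a singleton vertex in another class is adjacent to every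
singleton vertex. -/
lemma auxUniversal (hC : IsOptimalColoring G C) (hz : ({z} : Finset V) ∈ C)
    (hI : I ∈ C) (hIz : I ≠ {z}) {w : V} (hw : w ∈ I) (hadj : G.Adj z w)
    (huniq : ∀ x ∈ I, G.Adj z x → x = w) {v : V} (hv : ({v} : Finset V) ∈ C)
    (hvz : v ≠ z) (hvw : v ≠ w) : G.Adj w v := by
  have hzI : z ∉ I := auxNotMemClass hC.1 hz hI hIz
  have hwz : w ≠ z := fun h => hzI (h ▸ hw)
  have hD := auxPairSubset hz hI
  set A : Finset V := insert z (I.erase w) with hA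
  have hzA : z ∈ A := mem_insert_self _ _
  have hwA : w ∉ A := by
    intro h
    rcases mem_insert.1 h with h1 | h1
    · exact hwz h1
    · exact (mem_erase.1 h1).1 rfl
  have hsA : ({w} : Finset V) ≠ A := fun h => hwA (h ▸ mem_singleton_self w)
  obtain ⟨hC', hcard⟩ := auxRecolor hC.1 {({z} : Finset V), I} {({w} : Finset V), A} hD
    (by
      intro u
      constructor
      · rintro ⟨K, hK, hu⟩
        rcases mem_insert.1 hK with h | h
        · rw [h] at hu
          rw [mem_singleton.1 hu]
          exact ⟨A, mem_insert_of_mem (mem_singleton_self A), hzA⟩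
        · rw [mem_singleton.1 h] at hu
          by_cases huw : u = w
          · exact ⟨{w}, mem_insert_self _ _, by rw [huw]; exact mem_singleton_self w⟩
          · exact ⟨A, mem_insert_of_mem (mem_singleton_self A),
              mem_insert_of_mem (mem_erase.2 ⟨huw, hu⟩)⟩
      · rintro ⟨K, hK, hu⟩
        rcases mem_insert.1 hK with h | h
        · rw [h] at hu
          rw [mem_singleton.1 hu]
          exact ⟨I, mem_insert_of_mem (mem_singleton_self I), hw⟩
        · rw [mem_singleton.1 h] at hu
          rcases mem_insert.1 hu with h1 | h1
          · exact ⟨{z}, mem_insert_self _ _, by rw [h1]; exact mem_singleton_self z⟩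
          · exact ⟨I, mem_insert_of_mem (mem_singleton_self I), (mem_erase.1 h1).2⟩)
    (by
      intro K hK
      rcases mem_insert.1 hK with h | h
      · rw [h]; exact ⟨w, mem_singleton_self w⟩
      · rw [mem_singleton.1 h]; exact ⟨z, hzA⟩)
    (by
      intro K hK x hx y hy
      rcases mem_insert.1 hK with h | h
      · rw [h] at hx hy
        rw [mem_singleton.1 hx, mem_singleton.1 hy]
        exact G.loopless.irrefl w
      · rw [mem_singleton.1 h] at hx hy
        rcases mem_insert.1 hx with h1 | h1 <;> rcases mem_insert.1 hy with h2 | h2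
        · rw [h1, h2]; exact G.loopless.irrefl z
        · rw [h1]
          exact fun hxy => (mem_erase.1 h2).1 (huniq y (mem_erase.1 h2).2 hxy)
        · rw [h2]
          exact fun hxy => (mem_erase.1 h1).1 (huniq x (mem_erase.1 h1).2 hxy.symm)
        · exact hC.1.2.2 I hI x (mem_erase.1 h1).2 y (mem_erase.1 h2).2)
    (by
      intro K hK L hL hne u huK huL
      rcases mem_insert.1 hK with h | h <;> rcases mem_insert.1 hL with h' | h'
      · exact hne (h.trans h'.symm)
      · rw [h] at huK
        rw [mem_singleton.1 h'] at huL
        rw [mem_singleton.1 huK] at huL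
        exact hwA huL
      · rw [mem_singleton.1 h] at huK
        rw [h'] at huL
        rw [mem_singleton.1 huL] at huK
        exact hwA huK
      · exact hne ((mem_singleton.1 h).trans (mem_singleton.1 h').symm))
  have h2 : ({({z} : Finset V), I} : Finset (Finset V)).card = 2 := by
    rw [card_insert_of_notMem (by simpa using fun h => hIz h.symm), card_singleton]
  have h2' : ({({w} : Finset V), A} : Finset (Finset V)).card = 2 := by
    rw [card_insert_of_notMem (by simpa using hsA), card_singleton]
  have hge : 2 ≤ C.card := by
    have := card_le_card hD
    rwa [h2] at this
  have hopt' : IsOptimalColoring G (C \ {({z} : Finset V), I} ∪ {({w} : Finset V), A}) := by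
    refine ⟨hC', ?_⟩
    rw [hcard, h2, h2', ← hC.2]
    omega
  have hwmem : ({w} : Finset V) ∈ C \ {({z} : Finset V), I} ∪ {({w} : Finset V), A} :=
    mem_union_right _ (mem_insert_self _ _)
  have hvmem : ({v} : Finset V) ∈ C \ {({z} : Finset V), I} ∪ {({w} : Finset V), A} := by
    refine mem_union_left _ (mem_sdiff.2 ⟨hv, ?_⟩)
    intro h
    rcases mem_insert.1 h with h1 | h1
    · exact hvz (Finset.singleton_inj.1 h1)
    · rw [← mem_singleton.1 h1] at hw
      exact hvw (mem_singleton.1 hw).symm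
  exact auxAdjSingletons hopt' hwmem hvmem (Ne.symm hvw)

/-- L4: unique neighbors of two distinct singleton vertices in two distinct classes
are adjacent. -/
lemma auxCrossAdj (hC : IsOptimalColoring G C) (hz : ({z} : Finset V) ∈ C)
    (hz' : ({z'} : Finset V) ∈ C) (hzz' : z ≠ z')
    (hI : I ∈ C) (hJ : J ∈ C) (hIJ : I ≠ J) (hIz : I ≠ {z}) (hIz' : I ≠ {z'})
    (hJz : J ≠ {z}) (hJz' : J ≠ {z'}) {w₁ w₂ : V}
    (hw₁ : w₁ ∈ I) (huniq₁ : ∀ x ∈ I, G.Adj z x → x = w₁)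
    (hw₂ : w₂ ∈ J) (huniq₂ : ∀ x ∈ J, G.Adj z' x → x = w₂) : G.Adj w₁ w₂ := by
  by_contra hn
  have hzI : z ∉ I := auxNotMemClass hC.1 hz hI hIz
  have hzJ : z ∉ J := auxNotMemClass hC.1 hz hJ hJz
  have hz'I : z' ∉ I := auxNotMemClass hC.1 hz' hI hIz'
  have hz'J : z' ∉ J := auxNotMemClass hC.1 hz' hJ hJz'
  have hdIJ : ∀ x, x ∈ I → x ∈ J → False := auxClassDisj hC.1 hI hJ hIJ
  have hww : w₁ ≠ w₂ := fun h => hdIJ w₁ hw₁ (h ▸ hw₂)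
  have hzw₁ : z ≠ w₁ := fun h => hzI (h ▸ hw₁)
  have hzw₂ : z ≠ w₂ := fun h => hzJ (h ▸ hw₂)
  have hz'w₁ : z' ≠ w₁ := fun h => hz'I (h ▸ hw₁)
  have hz'w₂ : z' ≠ w₂ := fun h => hz'J (h ▸ hw₂)
  set A : Finset V := insert z (I.erase w₁) with hA
  set B : Finset V := insert z' (J.erase w₂) with hB
  set K : Finset V := ({w₁, w₂} : Finset V) with hK
  have hmemA : ∀ u, u ∈ A ↔ (u = z ∨ (u ≠ w₁ ∧ u ∈ I)) := by
    intro u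
    simp only [hA, mem_insert, mem_erase]
  have hmemB : ∀ u, u ∈ B ↔ (u = z' ∨ (u ≠ w₂ ∧ u ∈ J)) := by
    intro u
    simp only [hB, mem_insert, mem_erase]
  have hmemK : ∀ u, u ∈ K ↔ (u = w₁ ∨ u = w₂) := by
    intro u
    simp only [hK, mem_insert, mem_singleton]
  have hAB : ∀ u, u ∈ A → u ∈ B → False := by
    intro u h1 h2
    rcases (hmemA u).1 h1 with h1 | ⟨-, h1⟩ <;> rcases (hmemB u).1 h2 with h2 | ⟨-, h2⟩
    · exact hzz' (h1 ▸ h2 ▸ rfl)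
    · exact hzJ (h1 ▸ h2)
    · exact hz'I (h2 ▸ h1)
    · exact hdIJ u h1 h2
  have hAK : ∀ u, u ∈ A → u ∈ K → False := by
    intro u h1 h2
    rcases (hmemA u).1 h1 with h1 | ⟨hne1, h1⟩ <;> rcases (hmemK u).1 h2 with h2 | h2
    · exact hzw₁ (h1 ▸ h2 ▸ rfl)
    · exact hzw₂ (h1 ▸ h2 ▸ rfl)
    · exact hne1 h2
    · exact hdIJ u h1 (h2 ▸ hw₂)
  have hBK : ∀ u, u ∈ B → u ∈ K → False := by
    intro u h1 h2
    rcases (hmemB u).1 h1 with h1 | ⟨hne1, h1⟩ <;> rcases (hmemK u).1 h2 with h2 | h2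
    · exact hz'w₁ (h1 ▸ h2 ▸ rfl)
    · exact hz'w₂ (h1 ▸ h2 ▸ rfl)
    · exact hdIJ u (h2 ▸ hw₁) h1
    · exact hne1 h2
  have hzA : z ∈ A := mem_insert_self _ _
  have hz'B : z' ∈ B := mem_insert_self _ _
  have hABne : A ≠ B := fun h => hAB z hzA (h ▸ hzA)
  have hAKne : A ≠ K := fun h => hAK z hzA (h ▸ hzA)
  have hBKne : B ≠ K := fun h => hBK z' hz'B (h ▸ hz'B)
  set D : Finset (Finset V) := {({z} : Finset V), ({z'} : Finset V), I, J} with hDdef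
  have hmemD : ∀ L : Finset V, L ∈ D ↔ (L = {z} ∨ L = {z'} ∨ L = I ∨ L = J) := by
    intro L
    simp only [hDdef, mem_insert, mem_singleton]
  set E : Finset (Finset V) := {A, B, K} with hEdef
  have hmemE : ∀ L : Finset V, L ∈ E ↔ (L = A ∨ L = B ∨ L = K) := by
    intro L
    simp only [hEdef, mem_insert, mem_singleton]
  have hD : D ⊆ C := by
    intro L hL
    rcases (hmemD L).1 hL with h | h | h | h <;> rw [h] <;> assumption
  have hcardD : D.card = 4 := by
    rw [hDdef]
    rw [card_insert_of_notMem, card_insert_of_notMem, card_insert_of_notMem,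
      card_singleton]
    · simp only [mem_singleton]; exact hIJ
    · simp only [mem_insert, mem_singleton]
      push_neg
      exact ⟨fun h => hz'I (h ▸ mem_singleton_self z'), fun h => hz'J (h ▸ mem_singleton_self z')⟩
    · simp only [mem_insert, mem_singleton]
      push_neg
      refine ⟨fun h => hzz' (Finset.singleton_inj.1 h), fun h => hzI (h ▸ mem_singleton_self z),
        fun h => hzJ (h ▸ mem_singleton_self z)⟩
  have hcardE : E.card = 3 := by
    rw [hEdef]
    rw [card_insert_of_notMem, card_insert_of_notMem, card_singleton]
    · simp only [mem_singleton]; exact hBKne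
    · simp only [mem_insert, mem_singleton]
      push_neg
      exact ⟨hABne, hAKne⟩
  obtain ⟨hC', hcard⟩ := auxRecolor hC.1 D E hD
    (by
      intro u
      constructor
      · rintro ⟨L, hL, hu⟩
        rcases (hmemD L).1 hL with h | h | h | h
        · rw [h] at hu
          rw [mem_singleton.1 hu]
          exact ⟨A, (hmemE A).2 (Or.inl rfl), hzA⟩
        · rw [h] at hu
          rw [mem_singleton.1 hu]
          exact ⟨B, (hmemE B).2 (Or.inr (Or.inl rfl)), hz'B⟩
        · rw [h] at hu
          by_cases huw : u = w₁
          · exact ⟨K, (hmemE K).2 (Or.inr (Or.inr rfl)), (hmemK u).2 (Or.inl huw)⟩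
          · exact ⟨A, (hmemE A).2 (Or.inl rfl), (hmemA u).2 (Or.inr ⟨huw, hu⟩)⟩
        · rw [h] at hu
          by_cases huw : u = w₂
          · exact ⟨K, (hmemE K).2 (Or.inr (Or.inr rfl)), (hmemK u).2 (Or.inr huw)⟩
          · exact ⟨B, (hmemE B).2 (Or.inr (Or.inl rfl)), (hmemB u).2 (Or.inr ⟨huw, hu⟩)⟩
      · rintro ⟨L, hL, hu⟩
        rcases (hmemE L).1 hL with h | h | h
        · rw [h] at hu
          rcases (hmemA u).1 hu with h1 | ⟨-, h1⟩
          · exact ⟨{z}, (hmemD _).2 (Or.inl rfl), h1 ▸ mem_singleton_self z⟩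
          · exact ⟨I, (hmemD I).2 (Or.inr (Or.inr (Or.inl rfl))), h1⟩
        · rw [h] at hu
          rcases (hmemB u).1 hu with h1 | ⟨-, h1⟩
          · exact ⟨{z'}, (hmemD _).2 (Or.inr (Or.inl rfl)), h1 ▸ mem_singleton_self z'⟩
          · exact ⟨J, (hmemD J).2 (Or.inr (Or.inr (Or.inr rfl))), h1⟩
        · rw [h] at hu
          rcases (hmemK u).1 hu with h1 | h1
          · exact ⟨I, (hmemD I).2 (Or.inr (Or.inr (Or.inl rfl))), h1 ▸ hw₁⟩
          · exact ⟨J, (hmemD J).2 (Or.inr (Or.inr (Or.inr rfl))), h1 ▸ hw₂⟩)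
    (by
      intro L hL
      rcases (hmemE L).1 hL with h | h | h <;> rw [h]
      · exact ⟨z, hzA⟩
      · exact ⟨z', hz'B⟩
      · exact ⟨w₁, (hmemK w₁).2 (Or.inl rfl)⟩)
    (by
      intro L hL x hx y hy
      rcases (hmemE L).1 hL with h | h | h <;> rw [h] at hx hy
      · rcases (hmemA x).1 hx with h1 | ⟨hne1, h1⟩ <;> rcases (hmemA y).1 hy with h2 | ⟨hne2, h2⟩
        · rw [h1, h2]; exact G.loopless.irrefl z
        · rw [h1]; exact fun hxy => hne2 (huniq₁ y h2 hxy)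
        · rw [h2]; exact fun hxy => hne1 (huniq₁ x h1 hxy.symm)
        · exact hC.1.2.2 I hI x h1 y h2
      · rcases (hmemB x).1 hx with h1 | ⟨hne1, h1⟩ <;> rcases (hmemB y).1 hy with h2 | ⟨hne2, h2⟩
        · rw [h1, h2]; exact G.loopless.irrefl z'
        · rw [h1]; exact fun hxy => hne2 (huniq₂ y h2 hxy)
        · rw [h2]; exact fun hxy => hne1 (huniq₂ x h1 hxy.symm)
        · exact hC.1.2.2 J hJ x h1 y h2
      · rcases (hmemK x).1 hx with h1 | h1 <;> rcases (hmemK y).1 hy with h2 | h2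
        · rw [h1, h2]; exact G.loopless.irrefl w₁
        · rw [h1, h2]; exact hn
        · rw [h1, h2]; exact fun h => hn h.symm
        · rw [h1, h2]; exact G.loopless.irrefl w₂)
    (by
      intro L1 hL1 L2 hL2 hne u h1 h2
      rcases (hmemE L1).1 hL1 with h | h | h <;> rcases (hmemE L2).1 hL2 with h' | h' | h' <;>
        rw [h] at h1 <;> rw [h'] at h2
      · exact hne (h.trans h'.symm)
      · exact hAB u h1 h2
      · exact hAK u h1 h2
      · exact hAB u h2 h1
      · exact hne (h.trans h'.symm)
      · exact hBK u h1 h2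
      · exact hAK u h2 h1
      · exact hBK u h2 h1
      · exact hne (h.trans h'.symm))
  have hle := auxChiLe hC'
  rw [hcard, hcardD, hcardE, hC.2] at hle
  have hge : 4 ≤ chi G := by
    have := card_le_card hD
    rwa [hcardD, hC.2] at this
  omega
end Structural


end AuxProof

theorem statement_4 (G : SimpleGraph V) [DecidableRel G.Adj]
    (h : (G.cliqueNum : ℝ) / 2 < (stinginess G : ℝ)) :
    (chi G : ℝ) ≤ ((G.cliqueNum : ℝ) + G.maxDegree + 1) / 2 := by
  classical
  have hω : G.cliqueNum < 2 * stinginess G := by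
    have : (G.cliqueNum : ℝ) < 2 * stinginess G := by linarith
    exact_mod_cast this
  suffices hmain : 2 * chi G ≤ G.cliqueNum + G.maxDegree + 1 by
    have : (2 * chi G : ℝ) ≤ (G.cliqueNum : ℝ) + G.maxDegree + 1 := by exact_mod_cast hmain
    linarith
  obtain ⟨C, hopt, hcount⟩ := auxStinginessAttained G
  set S : Finset V := univ.filter (fun v => ({v} : Finset V) ∈ C) with hSdef
  have hSmem : ∀ v, v ∈ S ↔ ({v} : Finset V) ∈ C := by
    intro v; simp [hSdef]
  have hfilter_eq : (C.filter fun I => I.card = 1) = S.image (fun v => ({v} : Finset V)) := by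
    ext I
    simp only [mem_filter, mem_image]
    constructor
    · rintro ⟨hIC, hI1⟩
      obtain ⟨v, rfl⟩ := Finset.card_eq_one.1 hI1
      exact ⟨v, (hSmem v).2 hIC, rfl⟩
    · rintro ⟨v, hv, rfl⟩
      exact ⟨(hSmem v).1 hv, card_singleton v⟩
  have hScard : S.card = stinginess G := by
    rw [← hcount, hfilter_eq, card_image_of_injective _ Finset.singleton_injective]
  have hω' : G.cliqueNum < 2 * S.card := by rw [hScard]; exact hω
  -- the unique-neighbor selector
  set f : V → Finset V → V := fun z I =>
    if h : (I.filter (G.Adj z)).card = 1 then (Finset.card_eq_one.1 h).choose else z with hfdef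
  have hfspec : ∀ z (I : Finset V), (I.filter (G.Adj z)).card = 1 →
      I.filter (G.Adj z) = {f z I} := by
    intro z I hI
    rw [hfdef]
    simp only [dif_pos hI]
    exact (Finset.card_eq_one.1 hI).choose_spec
  have hfmem : ∀ z (I : Finset V), (I.filter (G.Adj z)).card = 1 →
      f z I ∈ I ∧ G.Adj z (f z I) := by
    intro z I hI
    have h2 : f z I ∈ I.filter (G.Adj z) := by
      rw [hfspec z I hI]; exact mem_singleton_self _
    exact ⟨(mem_filter.1 h2).1, (mem_filter.1 h2).2⟩
  have hfuniq : ∀ z (I : Finset V), (I.filter (G.Adj z)).card = 1 →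
      ∀ x ∈ I, G.Adj z x → x = f z I := by
    intro z I hI x hx hadj
    have hx2 : x ∈ I.filter (G.Adj z) := mem_filter.2 ⟨hx, hadj⟩
    rw [hfspec z I hI] at hx2
    exact mem_singleton.1 hx2
  have hne_singleton : ∀ (I : Finset V) (a : V), I.card ≠ 1 → I ≠ {a} := by
    intro I a hcard hEq
    exact hcard (hEq ▸ card_singleton a)
  by_cases hcase : ∃ z ∈ S, ∀ I ∈ C, ∀ J ∈ C, I ≠ J → I.card ≠ 1 → J.card ≠ 1 →
      (I.filter (G.Adj z)).card = 1 → (J.filter (G.Adj z)).card = 1 → G.Adj (f z I) (f z J)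
  · -- CASE 1: a singleton vertex all of whose unique neighbors are pairwise adjacent
    obtain ⟨z, hzS, hgood⟩ := hcase
    have hz : ({z} : Finset V) ∈ C := (hSmem z).1 hzS
    set Cz := C.erase ({z} : Finset V) with hCzdef
    have hCzf : ∀ I ∈ Cz, I ∈ C ∧ I ≠ {z} :=
      fun I hI => ⟨mem_of_mem_erase hI, ne_of_mem_erase hI⟩
    have hCzcard : Cz.card + 1 = chi G := by
      rw [hCzdef, card_erase_of_mem hz, ← hopt.2]
      have : 1 ≤ C.card := card_pos.2 ⟨{z}, hz⟩
      omega
    have hdeg : G.degree z = ∑ I ∈ Cz, (I.filter (G.Adj z)).card := by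
      have hset : G.neighborFinset z = Cz.biUnion (fun I => I.filter (G.Adj z)) := by
        ext u
        simp only [SimpleGraph.mem_neighborFinset, mem_biUnion, mem_filter]
        constructor
        · intro hadj
          obtain ⟨K, ⟨hK, huK⟩, -⟩ := hopt.1.2.1 u
          refine ⟨K, mem_erase.2 ⟨?_, hK⟩, huK, hadj⟩
          intro hKz
          rw [hKz] at huK
          rw [mem_singleton.1 huK] at hadj
          exact G.loopless.irrefl z hadj
        · rintro ⟨K, -, -, hadj⟩
          exact hadj
      rw [← SimpleGraph.card_neighborFinset_eq_degree, hset]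
      exact card_biUnion (by
        intro I hI J hJ hne
        simp only [Function.onFun]
        rw [Finset.disjoint_left]
        intro u hu1 hu2
        exact auxClassDisj hopt.1 (hCzf I hI).1 (hCzf J hJ).1 hne u
          (mem_filter.1 hu1).1 (mem_filter.1 hu2).1)
    set Lz := Cz.filter (fun I => (I.filter (G.Adj z)).card = 1) with hLzdef
    set Mz := Cz.filter (fun I => ¬ (I.filter (G.Adj z)).card = 1) with hMzdef
    have hLM : Lz.card + Mz.card = Cz.card := by
      rw [hLzdef, hMzdef]
      exact card_filter_add_card_filter_not
        (fun I : Finset V => (I.filter (G.Adj z)).card = 1)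
    have hLzf : ∀ I ∈ Lz, I ∈ C ∧ I ≠ {z} ∧ (I.filter (G.Adj z)).card = 1 := by
      intro I hI
      have h1 := mem_filter.1 hI
      exact ⟨(hCzf I h1.1).1, (hCzf I h1.1).2, h1.2⟩
    have hsum : Lz.card + 2 * Mz.card ≤ G.degree z := by
      have hsplit : (∑ I ∈ Lz, (I.filter (G.Adj z)).card) +
          (∑ I ∈ Mz, (I.filter (G.Adj z)).card) = ∑ I ∈ Cz, (I.filter (G.Adj z)).card := by
        rw [hLzdef, hMzdef]
        exact sum_filter_add_sum_filter_not Cz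
          (fun I : Finset V => (I.filter (G.Adj z)).card = 1) _
      have h1 : ∑ I ∈ Lz, (I.filter (G.Adj z)).card = Lz.card := by
        rw [Finset.sum_congr rfl (fun I hI => (mem_filter.1 hI).2)]
        simp
        rfl
      have h2 : 2 * Mz.card ≤ ∑ I ∈ Mz, (I.filter (G.Adj z)).card := by
        calc 2 * Mz.card = Mz.card • 2 := by rw [smul_eq_mul, mul_comm]
        _ ≤ _ := by
          refine Finset.card_nsmul_le_sum Mz _ 2 ?_
          intro I hI
          have h3 := mem_filter.1 hI
          obtain ⟨w, hw, hadj⟩ := auxExistsAdj hopt hz (hCzf I h3.1).1 (hCzf I h3.1).2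
          have h4 : 0 < (I.filter (G.Adj z)).card :=
            card_pos.2 ⟨w, mem_filter.2 ⟨hw, hadj⟩⟩
          omega
      omega
    -- the clique: z together with its unique neighbors
    set Q : Finset V := insert z (Lz.image (f z)) with hQdef
    have hznot : z ∉ Lz.image (f z) := by
      intro hmem
      obtain ⟨I, hI, hEq⟩ := mem_image.1 hmem
      have := (hfmem z I (hLzf I hI).2.2).2
      rw [hEq] at this
      exact G.loopless.irrefl z this
    have hinj : Set.InjOn (f z) ↑Lz := by
      intro I hI J hJ hEq
      by_contra hne
      have h1 := (hfmem z I (hLzf I (mem_coe.1 hI)).2.2).1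
      have h2 := (hfmem z J (hLzf J (mem_coe.1 hJ)).2.2).1
      rw [hEq] at h1
      exact auxClassDisj hopt.1 (hLzf I (mem_coe.1 hI)).1 (hLzf J (mem_coe.1 hJ)).1 hne
        (f z J) h1 h2
    have hQcard : Q.card = Lz.card + 1 := by
      rw [hQdef, card_insert_of_notMem hznot, card_image_of_injOn hinj]
    have hQclique : G.IsClique (Q : Set V) := by
      intro x hx y hy hne
      rw [Finset.mem_coe, hQdef, mem_insert] at hx hy
      have key : ∀ u, u ∈ Lz.image (f z) → u ≠ z → G.Adj z u := by
        intro u hu _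
        obtain ⟨I, hI, hEq⟩ := mem_image.1 hu
        rw [← hEq]
        exact (hfmem z I (hLzf I hI).2.2).2
      rcases hx with rfl | hx
      · rcases hy with rfl | hy
        · exact absurd rfl hne
        · exact key y hy (Ne.symm hne)
      · rcases hy with rfl | hy
        · exact (key x hx hne).symm
        · -- both are unique neighbors
          obtain ⟨I, hI, hEqI⟩ := mem_image.1 hx
          obtain ⟨J, hJ, hEqJ⟩ := mem_image.1 hy
          obtain ⟨hIC, hIz, hI1⟩ := hLzf I hI
          obtain ⟨hJC, hJz, hJ1⟩ := hLzf J hJ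
          have hIJ : I ≠ J := by
            intro hEq
            rw [hEq] at hEqI
            exact hne (hEqI.symm.trans hEqJ)
          rw [← hEqI, ← hEqJ]
          by_cases hIcard : I.card = 1
          · obtain ⟨v, hv⟩ := Finset.card_eq_one.1 hIcard
            have hfv : f z I = v := by
              rw [hv]
              exact mem_singleton.1 (by rw [← hv]; exact (hfmem z I hI1).1)
            have hvC : ({v} : Finset V) ∈ C := hv ▸ hIC
            by_cases hJcard : J.card = 1
            · obtain ⟨v', hv'⟩ := Finset.card_eq_one.1 hJcard
              have hfv' : f z J = v' := by
                rw [hv']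
                exact mem_singleton.1 (by rw [← hv']; exact (hfmem z J hJ1).1)
              have hv'C : ({v'} : Finset V) ∈ C := hv' ▸ hJC
              rw [hfv, hfv']
              refine auxAdjSingletons hopt hvC hv'C ?_
              rw [← hfv, ← hfv']
              rw [hEqI, hEqJ]
              exact hne
            · -- I is a singleton class, J is not
              have hvz : v ≠ z := by
                intro hEq
                exact hIz (by rw [hv, hEq])
              have hvw : v ≠ f z J := by
                intro hEq
                refine auxClassDisj hopt.1 hIC hJC hIJ v ?_ ?_
                · rw [hv]; exact mem_singleton_self v
                · rw [hEq]; exact (hfmem z J hJ1).1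
              rw [hfv]
              exact (auxUniversal hopt hz hJC hJz (hfmem z J hJ1).1 (hfmem z J hJ1).2
                (fun x hx ha => (hfuniq z J hJ1 x hx ha)) hvC hvz hvw).symm
          · by_cases hJcard : J.card = 1
            · obtain ⟨v', hv'⟩ := Finset.card_eq_one.1 hJcard
              have hfv' : f z J = v' := by
                rw [hv']
                exact mem_singleton.1 (by rw [← hv']; exact (hfmem z J hJ1).1)
              have hv'C : ({v'} : Finset V) ∈ C := hv' ▸ hJC
              have hvz : v' ≠ z := by
                intro hEq
                exact hJz (by rw [hv', hEq])
              have hvw : v' ≠ f z I := by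
                intro hEq
                refine auxClassDisj hopt.1 hJC hIC hIJ.symm v' ?_ ?_
                · rw [hv']; exact mem_singleton_self v'
                · rw [hEq]; exact (hfmem z I hI1).1
              rw [hfv']
              exact auxUniversal hopt hz hIC hIz (hfmem z I hI1).1 (hfmem z I hI1).2
                (fun x hx ha => (hfuniq z I hI1 x hx ha)) hv'C hvz hvw
            · exact hgood I hIC J hJC hIJ hIcard hJcard hI1 hJ1
    have hQle : Q.card ≤ G.cliqueNum :=
      SimpleGraph.IsClique.card_le_cliqueNum (tc := hQclique)
    have hdegle := G.degree_le_maxDegree z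
    omega
  · -- CASE 2: every singleton vertex has a "bad pair"; build a clique of size 2|S|
    exfalso
    push_neg at hcase
    choose Ic hIcC Jc hJcC hIJc hIc1 hJc1 hfIc hfJc hnadj using hcase
    -- unique neighbors avoid S and are adjacent to all of S
    have hwS : ∀ (z : V) (hz : z ∈ S), ∀ v ∈ S, v ≠ f z (Ic z hz) := by
      intro z hz v hv hEq
      have hw := (hfmem z (Ic z hz) (hfIc z hz)).1
      rw [← hEq] at hw
      have hvC : ({v} : Finset V) ∈ C := (hSmem v).1 hv
      have := auxMemUnique hopt.1 (hIcC z hz) hvC hw (mem_singleton_self v)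
      exact hIc1 z hz (by rw [this]; exact card_singleton v)
    have hwadjS : ∀ (z : V) (hz : z ∈ S), ∀ v ∈ S, G.Adj (f z (Ic z hz)) v := by
      intro z hz v hv
      by_cases hvz : v = z
      · rw [hvz]
        exact ((hfmem z (Ic z hz) (hfIc z hz)).2).symm
      · exact auxUniversal hopt ((hSmem z).1 hz) (hIcC z hz)
          (hne_singleton _ _ (hIc1 z hz)) (hfmem z (Ic z hz) (hfIc z hz)).1
          (hfmem z (Ic z hz) (hfIc z hz)).2
          (fun x hx ha => hfuniq z (Ic z hz) (hfIc z hz) x hx ha)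
          ((hSmem v).1 hv) hvz (hwS z hz v hv)
    -- the chosen classes are pairwise distinct
    have hIcne : ∀ (z : V) (hz : z ∈ S) (z' : V) (hz' : z' ∈ S), z ≠ z' →
        Ic z hz ≠ Ic z' hz' := by
      intro z hz z' hz' hzz' hEq
      -- then the two unique neighbors coincide
      have hw' : f z' (Ic z' hz') ∈ Ic z hz := by
        rw [hEq]; exact (hfmem z' (Ic z' hz') (hfIc z' hz')).1
      have hadjw' : G.Adj z (f z' (Ic z' hz')) := (hwadjS z' hz' z hz).symm
      have hEqw : f z' (Ic z' hz') = f z (Ic z hz) :=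
        hfuniq z (Ic z hz) (hfIc z hz) _ hw' hadjw'
      -- contradiction with z's bad pair, via auxCrossAdj applied to z' and z
      have := auxCrossAdj hopt ((hSmem z').1 hz') ((hSmem z).1 hz) (Ne.symm hzz')
        (hIcC z' hz') (hJcC z hz)
        (by rw [← hEq]; exact hIJc z hz)
        (hne_singleton _ _ (hIc1 z' hz')) (hne_singleton _ _ (hIc1 z' hz'))
        (hne_singleton _ _ (hJc1 z hz)) (hne_singleton _ _ (hJc1 z hz))
        (hfmem z' (Ic z' hz') (hfIc z' hz')).1
        (fun x hx ha => hfuniq z' (Ic z' hz') (hfIc z' hz') x hx ha)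
        (hfmem z (Jc z hz) (hfJc z hz)).1
        (fun x hx ha => hfuniq z (Jc z hz) (hfJc z hz) x hx ha)
      rw [hEqw] at this
      exact hnadj z hz this
    have hwne : ∀ (z : V) (hz : z ∈ S) (z' : V) (hz' : z' ∈ S), z ≠ z' →
        f z (Ic z hz) ≠ f z' (Ic z' hz') := by
      intro z hz z' hz' hzz' hEq
      have h1 := (hfmem z (Ic z hz) (hfIc z hz)).1
      have h2 := (hfmem z' (Ic z' hz') (hfIc z' hz')).1
      rw [hEq] at h1
      exact auxClassDisj hopt.1 (hIcC z hz) (hIcC z' hz') (hIcne z hz z' hz' hzz')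
        (f z' (Ic z' hz')) h1 h2
    have hwadjw : ∀ (z : V) (hz : z ∈ S) (z' : V) (hz' : z' ∈ S), z ≠ z' →
        G.Adj (f z (Ic z hz)) (f z' (Ic z' hz')) := by
      intro z hz z' hz' hzz'
      exact auxCrossAdj hopt ((hSmem z).1 hz) ((hSmem z').1 hz') hzz'
        (hIcC z hz) (hIcC z' hz') (hIcne z hz z' hz' hzz')
        (hne_singleton _ _ (hIc1 z hz)) (hne_singleton _ _ (hIc1 z hz))
        (hne_singleton _ _ (hIc1 z' hz')) (hne_singleton _ _ (hIc1 z' hz'))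
        (hfmem z (Ic z hz) (hfIc z hz)).1
        (fun x hx ha => hfuniq z (Ic z hz) (hfIc z hz) x hx ha)
        (hfmem z' (Ic z' hz') (hfIc z' hz')).1
        (fun x hx ha => hfuniq z' (Ic z' hz') (hfIc z' hz') x hx ha)
    set W : Finset V := S.attach.image (fun x => f x.1 (Ic x.1 x.2)) with hWdef
    have hWmem : ∀ u, u ∈ W ↔ ∃ (z : V) (hz : z ∈ S), f z (Ic z hz) = u := by
      intro u
      simp only [hWdef, mem_image, mem_attach, true_and, Subtype.exists]
    have hdisjSW : Disjoint S W := by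
      rw [disjoint_left]
      intro v hv hvW
      obtain ⟨z, hz, hEq⟩ := (hWmem v).1 hvW
      exact hwS z hz v hv hEq.symm
    have hWcard : W.card = S.card := by
      rw [hWdef, card_image_of_injOn, card_attach]
      intro x _ y _ hEq
      by_cases hxy : x.1 = y.1
      · exact Subtype.ext hxy
      · exact absurd hEq (hwne x.1 x.2 y.1 y.2 hxy)
    have hTclique : G.IsClique ((S ∪ W : Finset V) : Set V) := by
      intro x hx y hy hne
      rw [Finset.mem_coe, mem_union] at hx hy
      rcases hx with hx | hx <;> rcases hy with hy | hy
      · exact auxAdjSingletons hopt ((hSmem x).1 hx) ((hSmem y).1 hy) hne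
      · obtain ⟨z, hz, hEq⟩ := (hWmem y).1 hy
        rw [← hEq]
        exact (hwadjS z hz x hx).symm
      · obtain ⟨z, hz, hEq⟩ := (hWmem x).1 hx
        rw [← hEq]
        exact hwadjS z hz y hy
      · obtain ⟨z, hz, hEq⟩ := (hWmem x).1 hx
        obtain ⟨z', hz', hEq'⟩ := (hWmem y).1 hy
        have hzz' : z ≠ z' := by
          intro hEq''
          subst hEq''
          rw [← hEq, ← hEq'] at hne
          exact hne rfl
        rw [← hEq, ← hEq']
        exact hwadjw z hz z' hz' hzz'
    have hTcard : (S ∪ W).card = 2 * S.card := by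
      rw [card_union_of_disjoint hdisjSW, hWcard]
      omega
    have hTle : (S ∪ W).card ≤ G.cliqueNum :=
      SimpleGraph.IsClique.card_le_cliqueNum (tc := hTclique)
    omega
end

section
/- Let G be a finite simple graph and H an induced subgraph of G (with G∖H denoting the subgraph induced on the complementary vertex set). If χ(G) = χ(G∖H) + χ(H), then ι(G) ≥ ι(G∖H) + ι(H). -/
open Finset

variable {V : Type*} [Fintype V] [DecidableEq V]

section Aux

variable {W : Type*} [Fintype W] [DecidableEq W]

lemma exists_coloring (G : SimpleGraph W) : ∃ C, IsColoring G C := by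
  refine ⟨Finset.univ.image fun v => ({v} : Finset W), ?_, ?_, ?_⟩
  · intro I hI
    obtain ⟨v, -, rfl⟩ := Finset.mem_image.mp hI
    exact ⟨v, Finset.mem_singleton_self v⟩
  · intro v
    refine ⟨{v}, ⟨Finset.mem_image.mpr ⟨v, Finset.mem_univ v, rfl⟩,
      Finset.mem_singleton_self v⟩, ?_⟩
    rintro J ⟨hJ, hvJ⟩
    obtain ⟨w, -, rfl⟩ := Finset.mem_image.mp hJ
    rw [Finset.mem_singleton] at hvJ
    subst hvJ; rfl
  · intro I hI v hv w hw
    obtain ⟨u, -, rfl⟩ := Finset.mem_image.mp hI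
    rw [Finset.mem_singleton] at hv hw
    subst hv; subst hw
    exact G.irrefl

lemma coloring_card_le (G : SimpleGraph W) (C : Finset (Finset W))
    (hC : IsColoring G C) : C.card ≤ Fintype.card W := by
  have hdisj : ∀ I ∈ C, ∀ J ∈ C, I ≠ J → Disjoint I J := by
    intro I hI J hJ hne
    rw [Finset.disjoint_left]
    intro v hvI hvJ
    obtain ⟨K, -, hK⟩ := hC.2.1 v
    exact hne ((hK I ⟨hI, hvI⟩).trans (hK J ⟨hJ, hvJ⟩).symm)
  calc C.card = ∑ _I ∈ C, 1 := by simp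
    _ ≤ ∑ I ∈ C, I.card := Finset.sum_le_sum fun I hI =>
        Finset.card_pos.mpr (hC.1 I hI)
    _ = (C.biUnion id).card := (Finset.card_biUnion hdisj).symm
    _ ≤ Fintype.card W := Finset.card_le_univ _

lemma exists_optimal (G : SimpleGraph W) : ∃ C, IsOptimalColoring G C := by
  have hne : {n | ∃ C : Finset (Finset W), IsColoring G C ∧ C.card = n}.Nonempty := by
    obtain ⟨C, hC⟩ := exists_coloring G
    exact ⟨C.card, C, hC, rfl⟩
  obtain ⟨C, hC, hcard⟩ := Nat.sInf_mem hne
  exact ⟨C, hC, hcard⟩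

lemma stinginess_bddAbove (G : SimpleGraph W) :
    BddAbove {n | ∃ C : Finset (Finset W), IsOptimalColoring G C ∧
      (C.filter fun I => I.card = 1).card = n} := by
  refine ⟨Fintype.card W, ?_⟩
  rintro n ⟨C, hC, rfl⟩
  exact (Finset.card_filter_le _ _).trans (coloring_card_le G C hC.1)

lemma le_stinginess (G : SimpleGraph W) (C : Finset (Finset W))
    (hC : IsOptimalColoring G C) :
    (C.filter fun I => I.card = 1).card ≤ stinginess G :=
  le_csSup (stinginess_bddAbove G) ⟨C, hC, rfl⟩

lemma exists_stingy (G : SimpleGraph W) :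
    ∃ C, IsOptimalColoring G C ∧
      (C.filter fun I => I.card = 1).card = stinginess G := by
  have hne : {n | ∃ C : Finset (Finset W), IsOptimalColoring G C ∧
      (C.filter fun I => I.card = 1).card = n}.Nonempty := by
    obtain ⟨C, hC⟩ := exists_optimal G
    exact ⟨_, C, hC, rfl⟩
  exact Nat.sSup_mem hne (stinginess_bddAbove G)

end Aux

theorem statement_5 (G : SimpleGraph V) (s : Finset V)
    (h : chi G = chi (G.induce (((sᶜ : Finset V) : Set V)))
      + chi (G.induce ((s : Set V)))) :
    stinginess (G.induce (((sᶜ : Finset V) : Set V)))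
      + stinginess (G.induce ((s : Set V))) ≤ stinginess G := by
  classical
  set A : Set V := ((sᶜ : Finset V) : Set V) with hA
  set B : Set V := ((s : Finset V) : Set V) with hB
  obtain ⟨C₁, hC₁opt, hC₁sting⟩ := exists_stingy (G.induce A)
  obtain ⟨C₂, hC₂opt, hC₂sting⟩ := exists_stingy (G.induce B)
  -- embed the color classes into V
  let e₁ : ↥A ↪ V := Function.Embedding.subtype _
  let e₂ : ↥B ↪ V := Function.Embedding.subtype _
  let f₁ : Finset ↥A ↪ Finset V := ⟨fun I => I.map e₁, Finset.map_injective e₁⟩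
  let f₂ : Finset ↥B ↪ Finset V := ⟨fun I => I.map e₂, Finset.map_injective e₂⟩
  let D₁ : Finset (Finset V) := C₁.map f₁
  let D₂ : Finset (Finset V) := C₂.map f₂
  have hmemA : ∀ J ∈ D₁, ∀ v ∈ J, v ∉ s := by
    intro J hJ v hv
    obtain ⟨I, -, rfl⟩ := Finset.mem_map.mp hJ
    obtain ⟨a, -, rfl⟩ := Finset.mem_map.mp hv
    have := a.2
    simpa [hA, e₁] using this
  have hmemB : ∀ J ∈ D₂, ∀ v ∈ J, v ∈ s := by
    intro J hJ v hv
    obtain ⟨I, -, rfl⟩ := Finset.mem_map.mp hJ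
    obtain ⟨a, -, rfl⟩ := Finset.mem_map.mp hv
    exact a.2
  have hne₁ : ∀ J ∈ D₁, J.Nonempty := by
    intro J hJ
    obtain ⟨I, hI, rfl⟩ := Finset.mem_map.mp hJ
    exact (hC₁opt.1.1 I hI).map
  have hne₂ : ∀ J ∈ D₂, J.Nonempty := by
    intro J hJ
    obtain ⟨I, hI, rfl⟩ := Finset.mem_map.mp hJ
    exact (hC₂opt.1.1 I hI).map
  have hdisj : Disjoint D₁ D₂ := by
    rw [Finset.disjoint_left]
    intro J hJ₁ hJ₂
    obtain ⟨v, hv⟩ := hne₁ J hJ₁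
    exact hmemA J hJ₁ v hv (hmemB J hJ₂ v hv)
  set C : Finset (Finset V) := D₁ ∪ D₂ with hCdef
  have hcol : IsColoring G C := by
    refine ⟨?_, ?_, ?_⟩
    · intro J hJ
      rcases Finset.mem_union.mp hJ with hJ | hJ
      exacts [hne₁ J hJ, hne₂ J hJ]
    · intro v
      by_cases hv : v ∈ s
      · have hv' : v ∈ B := by simpa [hB]
        obtain ⟨I, ⟨hI, hvI⟩, huniq⟩ := hC₂opt.1.2.1 ⟨v, hv'⟩
        refine ⟨I.map e₂, ⟨Finset.mem_union_right _ (Finset.mem_map_of_mem f₂ hI),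
          Finset.mem_map_of_mem e₂ hvI⟩, ?_⟩
        rintro J ⟨hJ, hvJ⟩
        rcases Finset.mem_union.mp hJ with hJ' | hJ'
        · exact absurd hv (hmemA J hJ' v hvJ)
        · obtain ⟨I', hI', rfl⟩ := Finset.mem_map.mp hJ'
          obtain ⟨a, haI', hav⟩ := Finset.mem_map.mp hvJ
          have ha : a = ⟨v, hv'⟩ := Subtype.ext hav
          subst ha
          rw [huniq I' ⟨hI', haI'⟩]
          exact rfl
      · have hv' : v ∈ A := by simpa [hA]
        obtain ⟨I, ⟨hI, hvI⟩, huniq⟩ := hC₁opt.1.2.1 ⟨v, hv'⟩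
        refine ⟨I.map e₁, ⟨Finset.mem_union_left _ (Finset.mem_map_of_mem f₁ hI),
          Finset.mem_map_of_mem e₁ hvI⟩, ?_⟩
        rintro J ⟨hJ, hvJ⟩
        rcases Finset.mem_union.mp hJ with hJ' | hJ'
        · obtain ⟨I', hI', rfl⟩ := Finset.mem_map.mp hJ'
          obtain ⟨a, haI', hav⟩ := Finset.mem_map.mp hvJ
          have ha : a = ⟨v, hv'⟩ := Subtype.ext hav
          subst ha
          rw [huniq I' ⟨hI', haI'⟩]
          exact rfl
        · exact absurd (hmemB J hJ' v hvJ) hv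
    · intro J hJ v hv w hw hadj
      rcases Finset.mem_union.mp hJ with hJ' | hJ'
      · obtain ⟨I, hI, rfl⟩ := Finset.mem_map.mp hJ'
        obtain ⟨a, ha, rfl⟩ := Finset.mem_map.mp hv
        obtain ⟨b, hb, rfl⟩ := Finset.mem_map.mp hw
        exact hC₁opt.1.2.2 I hI a ha b hb (by simpa [e₁] using hadj)
      · obtain ⟨I, hI, rfl⟩ := Finset.mem_map.mp hJ'
        obtain ⟨a, ha, rfl⟩ := Finset.mem_map.mp hv
        obtain ⟨b, hb, rfl⟩ := Finset.mem_map.mp hw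
        exact hC₂opt.1.2.2 I hI a ha b hb (by simpa [e₂] using hadj)
  have hcard : C.card = chi G := by
    rw [hCdef, Finset.card_union_of_disjoint hdisj]
    simp only [D₁, D₂, Finset.card_map]
    rw [hC₁opt.2, hC₂opt.2, h]
  have hopt : IsOptimalColoring G C := ⟨hcol, hcard⟩
  have hfilter : (C.filter fun I => I.card = 1).card
      = (C₁.filter fun I => I.card = 1).card + (C₂.filter fun I => I.card = 1).card := by
    rw [hCdef, Finset.filter_union,
      Finset.card_union_of_disjoint
        (hdisj.mono (Finset.filter_subset _ _) (Finset.filter_subset _ _))]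
    congr 1
    · rw [show D₁.filter (fun I => I.card = 1)
          = (C₁.filter fun I => I.card = 1).map f₁ by
        simp [D₁, Finset.filter_map, f₁, Function.comp_def]]
      rw [Finset.card_map]
    · rw [show D₂.filter (fun I => I.card = 1)
          = (C₂.filter fun I => I.card = 1).map f₂ by
        simp [D₂, Finset.filter_map, f₂, Function.comp_def]]
      rw [Finset.card_map]
  calc stinginess (G.induce A) + stinginess (G.induce B)
      = (C.filter fun I => I.card = 1).card := by
        rw [hfilter, hC₁sting, hC₂sting]
    _ ≤ stinginess G := le_stinginess G C hopt
end
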